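/- arXiv:1705.05346 — 3 statements merged into one kernel-verified Lean document; each statement's English description precedes it below -/
import Mathlib

section
/- Let N and k be positive integers with 2 ≤ k ≤ N, and let u : ℝ^N → ℝ be nonnegative, lower semicontinuous, and a viscosity supersolution of P⁺_k(D²u) = 0 in ℝ^N. Set m(r) = min_{|x| ≤ r} u(x). Then the map r ↦ m(r)·r^{k−2} is nondecreasing on [0, +∞). -/
open scoped BigOperators

/-- The eigenvalues of a symmetric real matrix, listed in nondecreasing order with
multiplicity (junk value `0` if the matrix is not Hermitian). -/
noncomputable def sortedEig {n : ℕ} (A : Matrix (Fin n) (Fin n) ℝ) : Fin n → ℝ :=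
  if h : A.IsHermitian then h.eigenvalues ∘ Tuple.sort h.eigenvalues else 0

/-- `P⁻_k(A)`: the sum of the `k` smallest eigenvalues of `A`. -/
noncomputable def Pminus {n : ℕ} (k : ℕ) (A : Matrix (Fin n) (Fin n) ℝ) : ℝ :=
  ∑ i : Fin n, if (i : ℕ) < k then sortedEig A i else 0

/-- `P⁺_k(A)`: the sum of the `k` largest eigenvalues of `A`. -/
noncomputable def Pplus {n : ℕ} (k : ℕ) (A : Matrix (Fin n) (Fin n) ℝ) : ℝ :=
  ∑ i : Fin n, if n - k ≤ (i : ℕ) then sortedEig A i else 0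

/-- The Hessian matrix `D²u(x)` of `u : ℝ^N → ℝ` at `x`. -/
noncomputable def hessianMatrix {N : ℕ} (u : EuclideanSpace ℝ (Fin N) → ℝ)
    (x : EuclideanSpace ℝ (Fin N)) : Matrix (Fin N) (Fin N) ℝ :=
  fun i j => iteratedFDeriv ℝ 2 u x ![EuclideanSpace.single i 1, EuclideanSpace.single j 1]

/-- `u` is a viscosity supersolution of `F(D²u) + g(u) = 0` in `Ω`. -/
def IsViscositySupersolution {N : ℕ} (F : Matrix (Fin N) (Fin N) ℝ → ℝ) (g : ℝ → ℝ)
    (Ω : Set (EuclideanSpace ℝ (Fin N))) (u : EuclideanSpace ℝ (Fin N) → ℝ) : Prop :=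
  ∀ x₀ ∈ Ω, ∀ φ : EuclideanSpace ℝ (Fin N) → ℝ, ContDiff ℝ 2 φ →
    IsLocalMinOn (fun x => u x - φ x) Ω x₀ →
      F (hessianMatrix φ x₀) + g (u x₀) ≤ 0

/-- `u` is a viscosity subsolution of `F(D²u) + g(u) = 0` in `Ω`. -/
def IsViscositySubsolution {N : ℕ} (F : Matrix (Fin N) (Fin N) ℝ → ℝ) (g : ℝ → ℝ)
    (Ω : Set (EuclideanSpace ℝ (Fin N))) (u : EuclideanSpace ℝ (Fin N) → ℝ) : Prop :=
  ∀ x₀ ∈ Ω, ∀ φ : EuclideanSpace ℝ (Fin N) → ℝ, ContDiff ℝ 2 φ →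
    IsLocalMaxOn (fun x => u x - φ x) Ω x₀ →
      0 ≤ F (hessianMatrix φ x₀) + g (u x₀)

/-- `u` is a viscosity solution of `F(D²u) + g(u) = 0` in `Ω`. -/
def IsViscositySolution {N : ℕ} (F : Matrix (Fin N) (Fin N) ℝ → ℝ) (g : ℝ → ℝ)
    (Ω : Set (EuclideanSpace ℝ (Fin N))) (u : EuclideanSpace ℝ (Fin N) → ℝ) : Prop :=
  IsViscositySubsolution F g Ω u ∧ IsViscositySupersolution F g Ω u

/-! ### Auxiliary lemmas -/

section Aux

open scoped RealInnerProductSpace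

/-- A lower semicontinuous function attains its minimum on a nonempty compact set. -/
lemma lsc_exists_min {X : Type*} [TopologicalSpace X] {f : X → ℝ}
    (hf : LowerSemicontinuous f) {K : Set X} (hK : IsCompact K) (hne : K.Nonempty) :
    ∃ x ∈ K, ∀ y ∈ K, f x ≤ f y := by
  by_contra h
  push_neg at h
  choose w hwK hw using h
  obtain ⟨x₀, hx₀⟩ := hne
  let ι := {x : X // x ∈ K}
  let U : ι → Set X := fun x => {z | f (w x.1 x.2) < f z}
  have hUo : ∀ i : ι, IsOpen (U i) := fun i => hf.isOpen_preimage _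
  have hcov : K ⊆ ⋃ i, U i := by
    intro z hz
    exact Set.mem_iUnion.2 ⟨⟨z, hz⟩, hw z hz⟩
  obtain ⟨t, ht⟩ := hK.elim_finite_subcover U hUo hcov
  have htne : t.Nonempty := by
    rcases Set.mem_iUnion₂.1 (ht hx₀) with ⟨i, hit, _⟩
    exact ⟨i, hit⟩
  obtain ⟨i₀, hi₀t, hi₀⟩ := t.exists_min_image (fun i => f (w i.1 i.2)) htne
  have hmem : w i₀.1 i₀.2 ∈ K := hwK _ _
  rcases Set.mem_iUnion₂.1 (ht hmem) with ⟨i, hit, hlt⟩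
  exact absurd (hi₀ i hit) (not_le.2 hlt)

lemma card_filter_fin (N k : ℕ) (hkN : k ≤ N) :
    (Finset.univ.filter fun i : Fin N => N - k ≤ (i : ℕ)).card = k := by
  rw [Finset.card_filter]
  rw [Fin.sum_univ_eq_sum_range (fun i => if N - k ≤ i then 1 else 0) N]
  rw [← Finset.sum_filter]
  have : Finset.filter (fun i => N - k ≤ i) (Finset.range N) = Finset.Ico (N - k) N := by
    ext i
    simp [Finset.mem_filter, Finset.mem_range, Finset.mem_Ico, and_comm]
  rw [this]
  simp [Nat.card_Ico, Nat.sub_sub_self hkN]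

lemma sorted_sum_bound (N k : ℕ) (hk1 : 1 ≤ k) (hkN : k ≤ N) (w : Fin N → ℝ)
    (hmono : Monotone w) (c μ : ℝ) (hc : ∀ i, c ≤ w i) (hμ : ∃ j, μ ≤ w j) :
    μ + ((k : ℝ) - 1) * c ≤ ∑ i : Fin N, if N - k ≤ (i : ℕ) then w i else 0 := by
  have hN : 0 < N := lt_of_lt_of_le hk1 hkN
  set L : Fin N := ⟨N - 1, by omega⟩ with hL
  obtain ⟨j, hj⟩ := hμ
  have hjL : j ≤ L := by
    rw [Fin.le_def]; simp [hL]; omega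
  have hwL : μ ≤ w L := le_trans hj (hmono hjL)
  set A := Finset.univ.filter fun i : Fin N => N - k ≤ (i : ℕ) with hA
  have hLA : L ∈ A := by
    simp [hA, hL]; omega
  have hcard : A.card = k := card_filter_fin N k hkN
  rw [← Finset.sum_filter, ← hA, ← Finset.add_sum_erase A w hLA]
  have herase : ((A.erase L).card : ℝ) = (k : ℝ) - 1 := by
    rw [Finset.card_erase_of_mem hLA, hcard]
    have : (1:ℕ) ≤ k := hk1
    push_cast [Nat.cast_sub this]
    ring
  have hbound : ((A.erase L).card) • c ≤ ∑ i ∈ A.erase L, w i :=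
    Finset.card_nsmul_le_sum _ _ _ (fun i _ => hc i)
  rw [nsmul_eq_mul, herase] at hbound
  linarith

lemma rank_one_hermitian (N : ℕ) (y : Fin N → ℝ) (c₁ c₂ : ℝ) :
    (Matrix.of fun i j => c₁ * (if j = i then 1 else 0) + c₂ * y i * y j :
      Matrix (Fin N) (Fin N) ℝ).IsHermitian := by
  ext i j
  simp only [Matrix.conjTranspose_apply, Matrix.of_apply, star_trivial]
  by_cases h : i = j
  · subst h; ring
  · simp [h, Ne.symm h]; ring

lemma eig_rank_one (N : ℕ) (y : Fin N → ℝ) (c₁ c₂ : ℝ) (hc₂ : 0 < c₂)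
    (hQ : 0 < ∑ i, y i * y i) :
    (∀ i, c₁ ≤ (rank_one_hermitian N y c₁ c₂).eigenvalues i) ∧
    (∃ j, (rank_one_hermitian N y c₁ c₂).eigenvalues j = c₁ + c₂ * ∑ i, y i * y i) := by
  set M : Matrix (Fin N) (Fin N) ℝ :=
    Matrix.of fun i j => c₁ * (if j = i then 1 else 0) + c₂ * y i * y j with hMdef
  have hM := rank_one_hermitian N y c₁ c₂
  set b := hM.eigenvectorBasis with hb
  set ev := hM.eigenvalues with hev
  have key : ∀ j i, c₁ * (b j) i + c₂ * y i * (∑ l, y l * (b j) l) = ev j * (b j) i := by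
    intro j i
    have h := congr_fun (hM.mulVec_eigenvectorBasis j) i
    simp only [Matrix.mulVec, dotProduct, Pi.smul_apply, smul_eq_mul, hMdef,
      Matrix.of_apply] at h
    rw [← h]
    rw [Finset.sum_congr rfl (fun l _ => by ring :
      ∀ l ∈ Finset.univ, (c₁ * (if l = i then 1 else 0) + c₂ * y i * y l) * (b j) l
        = c₁ * ((if l = i then 1 else 0) * (b j) l) + c₂ * y i * (y l * (b j) l))]
    rw [Finset.sum_add_distrib, ← Finset.mul_sum, ← Finset.mul_sum]
    congr 1
    · congr 1
      rw [Finset.sum_eq_single i]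
      · simp
      · intro l _ hl; simp [hl]
      · simp
  have hnorm : ∀ j, (∑ i, (b j) i * (b j) i) = 1 := by
    intro j
    have h1 : ‖b j‖ = 1 := b.orthonormal.1 j
    have h2 : (inner ℝ (b j) (b j) : ℝ) = ‖b j‖ ^ 2 := real_inner_self_eq_norm_sq _
    rw [h1] at h2
    rw [PiLp.inner_apply] at h2
    simpa [← sq] using h2
  have hform : ∀ j, ev j = c₁ + c₂ * (∑ l, y l * (b j) l) ^ 2 := by
    intro j
    set t := ∑ l, y l * (b j) l with ht
    have h := fun i => key j i
    have hsum : ∑ i, (c₁ * (b j) i + c₂ * y i * t) * (b j) i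
        = ∑ i, (ev j * (b j) i) * (b j) i := by
      exact Finset.sum_congr rfl fun i _ => by rw [h i]
    have hL : ∑ i, (c₁ * (b j) i + c₂ * y i * t) * (b j) i
        = c₁ * (∑ i, (b j) i * (b j) i) + c₂ * t * ∑ i, y i * (b j) i := by
      rw [Finset.sum_congr rfl (fun i _ => by ring :
        ∀ i ∈ Finset.univ, (c₁ * (b j) i + c₂ * y i * t) * (b j) i
          = c₁ * ((b j) i * (b j) i) + c₂ * t * (y i * (b j) i))]
      rw [Finset.sum_add_distrib, ← Finset.mul_sum, ← Finset.mul_sum]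
    have hR : ∑ i, (ev j * (b j) i) * (b j) i = ev j * ∑ i, (b j) i * (b j) i := by
      rw [Finset.mul_sum]
      exact Finset.sum_congr rfl fun i _ => by ring
    rw [hL, hR, hnorm j, ← ht] at hsum
    rw [mul_one, mul_one] at hsum
    rw [← hsum]; ring
  constructor
  · intro i
    rw [hform i]
    nlinarith [sq_nonneg (∑ l, y l * (b i) l)]
  · have hpar : ∑ j, (∑ l, y l * (b j) l) ^ 2 = ∑ i, y i * y i := by
      set Y : EuclideanSpace ℝ (Fin N) := WithLp.toLp 2 y with hY
      have h := b.sum_inner_mul_inner (𝕜 := ℝ) Y Y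
      have hyy : (inner ℝ Y Y : ℝ) = ∑ i, y i * y i := by
        rw [PiLp.inner_apply]; simp [RCLike.inner_apply, hY, sq]
      rw [hyy] at h
      rw [← h]
      refine Finset.sum_congr rfl fun j _ => ?_
      have h1 : (inner ℝ Y (b j) : ℝ) = ∑ l, y l * (b j) l := by
        rw [PiLp.inner_apply]; simp [RCLike.inner_apply, hY, mul_comm]
      have h2 : (inner ℝ (b j) Y : ℝ) = ∑ l, y l * (b j) l := by
        rw [PiLp.inner_apply]; simp [RCLike.inner_apply, hY, mul_comm]
      rw [h1, h2]; ring
    have hex : ∃ j, (∑ l, y l * (b j) l) ≠ 0 := by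
      by_contra hall
      push_neg at hall
      have h0 : ∑ j, (∑ l, y l * (b j) l) ^ 2 = 0 :=
        Finset.sum_eq_zero fun j _ => by rw [hall j]; norm_num
      rw [hpar] at h0; linarith
    obtain ⟨j, hj⟩ := hex
    refine ⟨j, ?_⟩
    set t := ∑ l, y l * (b j) l with ht
    have hyi : ∀ i, y i = t * (b j) i := by
      intro i
      have h1 := key j i
      have h2 := hform j
      rw [h2, ← ht] at h1
      have : c₂ * t * (y i - t * (b j) i) = 0 := by nlinarith [h1]
      rcases mul_eq_zero.1 this with h | h
      · rcases mul_eq_zero.1 h with h' | h'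
        · exact absurd h' (ne_of_gt hc₂)
        · exact absurd h' hj
      · linarith
    have hQt : ∑ i, y i * y i = t ^ 2 := by
      have : ∑ i, y i * y i = t ^ 2 * ∑ i, (b j) i * (b j) i := by
        rw [Finset.mul_sum]
        exact Finset.sum_congr rfl fun i _ => by rw [hyi i]; ring
      rw [this, hnorm j, mul_one]
    rw [hform j, ← ht, ← hQt]

/-- `x ↦ ⟪x, ·⟫` as a continuous linear map, over `ℝ`. -/
noncomputable def innerRight (E : Type*) [NormedAddCommGroup E] [InnerProductSpace ℝ E] :
    E →L[ℝ] E →L[ℝ] ℝ :=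
  LinearMap.mkContinuous
    { toFun := fun x => innerSL ℝ x
      map_add' := fun x y => by ext w; simp [inner_add_left]
      map_smul' := fun c x => by ext w; simp [inner_smul_left] }
    1 (fun x => by simp [innerSL_apply_norm])

@[simp] lemma innerRight_apply {E : Type*} [NormedAddCommGroup E] [InnerProductSpace ℝ E]
    (x w : E) : innerRight E x w = ⟪x, w⟫ := rfl

lemma hessian_radial {N : ℕ} (φ : EuclideanSpace ℝ (Fin N) → ℝ) (A B p : ℝ)
    (y : EuclideanSpace ℝ (Fin N)) (hy : 0 < ‖y‖)
    (hφeq : ∀ᶠ x in nhds y, φ x = A + B * (‖x‖ ^ 2 : ℝ) ^ p) :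
    ∀ i j, hessianMatrix φ y i j =
      (2 * B * p * (‖y‖ ^ 2 : ℝ) ^ (p - 1)) * (if j = i then 1 else 0)
      + (4 * B * p * (p - 1) * (‖y‖ ^ 2 : ℝ) ^ (p - 2)) * y i * y j := by
  classical
  let E := EuclideanSpace ℝ (Fin N)
  set q : E → ℝ := fun x => ‖x‖ ^ 2 with hq
  set ψ : E → ℝ := fun x => A + B * (q x) ^ p with hψ
  set e : E → ℝ := fun x => 2 * (B * (p * (q x) ^ (p - 1))) with he
  set F : E → (E →L[ℝ] ℝ) := fun x => e x • innerRight E x with hF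
  have hDψ : ∀ x : E, x ≠ 0 → HasFDerivAt ψ (F x) x := by
    intro x hx
    have hnx : ‖x‖ ≠ 0 := norm_ne_zero_iff.2 hx
    have hqx : q x ≠ 0 := by
      simp only [hq]
      positivity
    have hq' : HasFDerivAt q (2 • (innerSL ℝ x)) x := (hasStrictFDerivAt_norm_sq x).hasFDerivAt
    have hg : HasDerivAt (fun t : ℝ => A + B * t ^ p) (B * (p * (q x) ^ (p - 1))) (q x) := by
      simpa using ((Real.hasDerivAt_rpow_const (Or.inl hqx)).const_mul B).const_add A
    have hcomp := hg.comp_hasFDerivAt x hq'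
    refine hcomp.congr_fderiv ?_
    ext w
    simp only [hF, he]
    simp [ContinuousLinearMap.smul_apply, innerRight_apply, real_inner_smul_left]
    ring
  have hyne : y ≠ 0 := by
    intro h; rw [h] at hy; simp at hy
  have hny : ‖y‖ ≠ 0 := norm_ne_zero_iff.2 hyne
  have hqy : q y ≠ 0 := by simp only [hq]; positivity
  have hDe : HasFDerivAt e
      ((2 * (B * ((p - 1) * (q y) ^ (p - 1 - 1) * p))) • (2 • (innerSL ℝ y))) y := by
    have hq' : HasFDerivAt q (2 • (innerSL ℝ y)) y := (hasStrictFDerivAt_norm_sq y).hasFDerivAt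
    have hg : HasDerivAt (fun t : ℝ => 2 * (B * (p * t ^ (p - 1))))
        (2 * (B * ((p - 1) * (q y) ^ (p - 1 - 1) * p))) (q y) := by
      have h0 : HasDerivAt (fun t : ℝ => t ^ (p - 1)) ((p - 1) * (q y) ^ (p - 1 - 1)) (q y) :=
        Real.hasDerivAt_rpow_const (Or.inl hqy)
      have := ((h0.const_mul p).const_mul B).const_mul (2 : ℝ)
      refine this.congr_deriv ?_
      ring
    exact hg.comp_hasFDerivAt y hq'
  have hDinner : HasFDerivAt (fun x : E => innerRight E x) (innerRight E) y :=
    (innerRight E).hasFDerivAt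
  have hDF : HasFDerivAt F
      (e y • innerRight E +
        ((2 * (B * ((p - 1) * (q y) ^ (p - 1 - 1) * p))) • (2 • (innerSL ℝ y))).smulRight
          (innerRight E y)) y := hDe.smul hDinner
  have hU : IsOpen {x : E | x ≠ 0} := isOpen_ne
  have hmemU : y ∈ {x : E | x ≠ 0} := hyne
  have hφψ : φ =ᶠ[nhds y] ψ := by
    filter_upwards [hφeq] with x hx
    simpa [hψ, hq] using hx
  have hfd : fderiv ℝ φ =ᶠ[nhds y] F := by
    have hUmem : {x : E | x ≠ 0} ∈ nhds y := hU.mem_nhds hmemU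
    filter_upwards [hUmem, hφψ.eventuallyEq_nhds] with x hxU hx
    have h1 : HasFDerivAt φ (F x) x := (hDψ x hxU).congr_of_eventuallyEq hx
    exact h1.fderiv
  have hkey : fderiv ℝ (fderiv ℝ φ) y =
      e y • innerRight E +
        ((2 * (B * ((p - 1) * (q y) ^ (p - 1 - 1) * p))) • (2 • (innerSL ℝ y))).smulRight
          (innerRight E y) := by
    rw [hfd.fderiv_eq]
    exact hDF.fderiv
  intro i j
  have h2 : hessianMatrix φ y i j
      = fderiv ℝ (fderiv ℝ φ) y (EuclideanSpace.single i 1) (EuclideanSpace.single j 1) := by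
    simp only [hessianMatrix, iteratedFDeriv_two_apply]
    norm_num
  rw [h2, hkey]
  have hbi : ⟪y, (EuclideanSpace.single i (1:ℝ))⟫ = y i := by
    rw [real_inner_comm]
    simp [EuclideanSpace.inner_single_left]
  have hbj : ⟪y, (EuclideanSpace.single j (1:ℝ))⟫ = y j := by
    rw [real_inner_comm]
    simp [EuclideanSpace.inner_single_left]
  have hbb : ⟪(EuclideanSpace.single i (1:ℝ)), (EuclideanSpace.single j (1:ℝ))⟫
      = (if j = i then (1:ℝ) else 0) := by
    simp [EuclideanSpace.inner_single_left, EuclideanSpace.single_apply]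
    exact if_congr eq_comm rfl rfl
  simp only [ContinuousLinearMap.add_apply, ContinuousLinearMap.smul_apply,
    ContinuousLinearMap.smulRight_apply, smul_eq_mul,
    ContinuousLinearMap.coe_smul', Pi.smul_apply, innerSL_apply_apply]
  rw [innerRight_apply, innerRight_apply]
  rw [hbb, hbi, hbj]
  have hq2 : (p - 1 - 1) = p - 2 := by ring
  rw [hq2]
  simp only [he, hq]
  ring

lemma rpow_neg_anti {x z γ : ℝ} (hx : 0 < x) (hxz : x ≤ z) (hγ : 0 ≤ γ) :
    z ^ (-γ) ≤ x ^ (-γ) := by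
  have hz : 0 < z := lt_of_lt_of_le hx hxz
  rw [Real.rpow_neg hx.le, Real.rpow_neg hz.le]
  have h1 : x ^ γ ≤ z ^ γ := Real.rpow_le_rpow hx.le hxz hγ
  have h2 : (0:ℝ) < x ^ γ := Real.rpow_pos_of_pos hx γ
  exact inv_anti₀ h2 h1

lemma rpow_neg_strict_anti {x z γ : ℝ} (hx : 0 < x) (hxz : x < z) (hγ : 0 < γ) :
    z ^ (-γ) < x ^ (-γ) := by
  have hz : 0 < z := lt_trans hx hxz
  rw [Real.rpow_neg hx.le, Real.rpow_neg hz.le]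
  have h1 : x ^ γ < z ^ γ := Real.rpow_lt_rpow hx.le hxz hγ
  have h2 : (0:ℝ) < x ^ γ := Real.rpow_pos_of_pos hx γ
  exact inv_strictAnti₀ h2 h1

end Aux

set_option maxHeartbeats 3000000 in
theorem statement16 (N k : ℕ) (hk : 2 ≤ k) (hkN : k ≤ N)
    (u : EuclideanSpace ℝ (Fin N) → ℝ) (hnn : ∀ x, 0 ≤ u x)
    (hlsc : LowerSemicontinuous u)
    (hsuper : IsViscositySupersolution (Pplus k) (fun _ => 0) Set.univ u)
    (m : ℝ → ℝ) (hm : ∀ r : ℝ, m r = sInf (u '' Metric.closedBall 0 r)) :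
    ∀ r s : ℝ, 0 ≤ r → r ≤ s →
      m r * r ^ ((k : ℝ) - 2) ≤ m s * s ^ ((k : ℝ) - 2) := by
  classical
  -- basic facts about m
  have hmle : ∀ ρ : ℝ, ∀ z : EuclideanSpace ℝ (Fin N), ‖z‖ ≤ ρ → m ρ ≤ u z := by
    intro ρ z hz
    rw [hm ρ]
    refine csInf_le ⟨0, ?_⟩ ⟨z, ?_, rfl⟩
    · rintro _ ⟨w, _, rfl⟩; exact hnn w
    · simpa [Metric.mem_closedBall, dist_eq_norm] using hz
  have hm0 : ∀ ρ : ℝ, 0 ≤ ρ → 0 ≤ m ρ := by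
    intro ρ hρ
    rw [hm ρ]
    refine le_csInf ⟨u 0, 0, by simpa [Metric.mem_closedBall] using hρ, rfl⟩ ?_
    rintro _ ⟨w, _, rfl⟩; exact hnn w
  have hmattain : ∀ ρ : ℝ, 0 ≤ ρ →
      ∃ x : EuclideanSpace ℝ (Fin N), ‖x‖ ≤ ρ ∧ u x = m ρ := by
    intro ρ hρ
    obtain ⟨x, hxK, hxmin⟩ := lsc_exists_min hlsc (isCompact_closedBall (0:EuclideanSpace ℝ (Fin N)) ρ)
      ⟨0, by simpa [Metric.mem_closedBall] using hρ⟩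
    refine ⟨x, by simpa [Metric.mem_closedBall, dist_eq_norm] using hxK, ?_⟩
    refine le_antisymm ?_ (hmle ρ x (by simpa [Metric.mem_closedBall, dist_eq_norm] using hxK))
    rw [hm ρ]
    refine le_csInf ⟨u 0, 0, by simpa [Metric.mem_closedBall] using hρ, rfl⟩ ?_
    rintro _ ⟨w, hw, rfl⟩
    exact hxmin w hw
  have hmanti : ∀ ρ₁ ρ₂ : ℝ, 0 ≤ ρ₁ → ρ₁ ≤ ρ₂ → m ρ₂ ≤ m ρ₁ := by
    intro ρ₁ ρ₂ h1 h12
    rw [hm ρ₁, hm ρ₂]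
    refine csInf_le_csInf ⟨0, ?_⟩ ⟨u 0, 0, by simpa [Metric.mem_closedBall] using h1, rfl⟩
      (Set.image_mono (Metric.closedBall_subset_closedBall h12))
    rintro _ ⟨w, _, rfl⟩; exact hnn w
  -- MAIN CASE
  have key : ∀ r s : ℝ, 0 < r → r < s →
      m r * r ^ ((k : ℝ) - 2) ≤ m s * s ^ ((k : ℝ) - 2) := by
    intro r s hr hrs
    by_contra hcon
    have hlt : m s * s ^ ((k : ℝ) - 2) < m r * r ^ ((k : ℝ) - 2) := not_le.1 hcon
    have hs : 0 < s := lt_trans hr hrs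
    have hek : (0:ℝ) ≤ (k : ℝ) - 2 := by
      have : (2:ℝ) ≤ (k:ℝ) := by exact_mod_cast hk
      linarith
    -- m s < m r and 0 < m r
    have hms_lt : m s < m r := by
      by_contra hge
      push_neg at hge
      have h1 : r ^ ((k:ℝ)-2) ≤ s ^ ((k:ℝ)-2) := Real.rpow_le_rpow hr.le hrs.le hek
      have h2 : m r * r ^ ((k:ℝ)-2) ≤ m s * s ^ ((k:ℝ)-2) :=
        mul_le_mul hge h1 (Real.rpow_nonneg hr.le _) (hm0 s hs.le)
      linarith
    have hmr : 0 < m r := by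
      rcases lt_or_ge 0 (m r) with h | h
      · exact h
      have hmr0 : m r = 0 := le_antisymm h (hm0 r hr.le)
      rw [hmr0, zero_mul] at hlt
      have : 0 ≤ m s * s ^ ((k:ℝ)-2) :=
        mul_nonneg (hm0 s hs.le) (Real.rpow_nonneg hs.le _)
      linarith
    -- choose γ > k-2 with m s * s^γ < m r * r^γ
    obtain ⟨γ, hγe, hγlt⟩ : ∃ γ : ℝ, (k:ℝ) - 2 < γ ∧ m s * s ^ γ < m r * r ^ γ := by
      set f : ℝ → ℝ := fun γ => m r * Real.exp (Real.log r * γ) - m s * Real.exp (Real.log s * γ)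
        with hf
      have hfc : Continuous f := by
        apply Continuous.sub
        · exact continuous_const.mul (Real.continuous_exp.comp (continuous_const.mul continuous_id))
        · exact continuous_const.mul (Real.continuous_exp.comp (continuous_const.mul continuous_id))
      have hval : ∀ γ : ℝ, f γ = m r * r ^ γ - m s * s ^ γ := by
        intro γ
        rw [hf]
        simp only
        rw [Real.rpow_def_of_pos hr, Real.rpow_def_of_pos hs]
      have hopen : IsOpen {γ : ℝ | 0 < f γ} := isOpen_lt continuous_const hfc
      have hmem : ((k:ℝ) - 2) ∈ {γ : ℝ | 0 < f γ} := by
        simp only [Set.mem_setOf_eq, hval]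
        linarith
      obtain ⟨ε, hε, hball⟩ := Metric.isOpen_iff.1 hopen _ hmem
      refine ⟨(k:ℝ) - 2 + ε/2, by linarith, ?_⟩
      have : ((k:ℝ) - 2 + ε/2) ∈ {γ : ℝ | 0 < f γ} := by
        apply hball
        rw [Metric.mem_ball, Real.dist_eq,
          show ((k:ℝ) - 2 + ε/2 - ((k:ℝ) - 2)) = ε/2 by ring,
          abs_of_nonneg (by linarith : (0:ℝ) ≤ ε/2)]
        linarith
      rw [Set.mem_setOf_eq, hval] at this
      linarith
    have hγpos : 0 < γ := lt_of_le_of_lt hek hγe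
    -- δ > 0
    have hδ : 0 < m r * s ^ (-γ) - m s * r ^ (-γ) := by
      have h1 : m s * s ^ γ * (r ^ (-γ) * s ^ (-γ)) < m r * r ^ γ * (r ^ (-γ) * s ^ (-γ)) := by
        apply mul_lt_mul_of_pos_right hγlt
        exact mul_pos (Real.rpow_pos_of_pos hr _) (Real.rpow_pos_of_pos hs _)
      have hr1 : r ^ γ * r ^ (-γ) = 1 := by
        rw [← Real.rpow_add hr]; simp
      have hs1 : s ^ γ * s ^ (-γ) = 1 := by
        rw [← Real.rpow_add hs]; simp
      have e1 : m s * s ^ γ * (r ^ (-γ) * s ^ (-γ)) = m s * r ^ (-γ) * (s ^ γ * s ^ (-γ)) := by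
        ring
      have e2 : m r * r ^ γ * (r ^ (-γ) * s ^ (-γ)) = m r * s ^ (-γ) * (r ^ γ * r ^ (-γ)) := by
        ring
      rw [e1, e2, hs1, hr1, mul_one, mul_one] at h1
      linarith
    set δ := m r * s ^ (-γ) - m s * r ^ (-γ) with hδdef
    -- choose S
    obtain ⟨S, hSs, hSsmall⟩ : ∃ S : ℝ, s < S ∧ (m r - m s) * S ^ (-γ) < δ := by
      have h1 : Filter.Tendsto (fun S : ℝ => (m r - m s) * S ^ (-γ)) Filter.atTop (nhds 0) := by
        have := (tendsto_rpow_neg_atTop hγpos).const_mul (m r - m s)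
        simpa using this
      have h2 := h1.eventually_lt_const hδ
      obtain ⟨S, hS1, hS2⟩ := (h2.and (Filter.eventually_gt_atTop s)).exists
      exact ⟨S, hS2, hS1⟩
    have hS0 : 0 < S := lt_trans hs hSs
    -- constants
    have hmS0 : 0 ≤ m S := hm0 S hS0.le
    have hmSms : m S ≤ m s := hmanti s S hs.le hSs.le
    have hD2 : 0 < r ^ (-γ) - S ^ (-γ) := by
      have := rpow_neg_strict_anti hr (lt_trans hrs hSs) hγpos
      linarith
    have hD1 : 0 < r ^ (-γ) - s ^ (-γ) := by
      have := rpow_neg_strict_anti hr hrs hγpos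
      linarith
    set B := (m r - m S) / (r ^ (-γ) - S ^ (-γ)) with hBdef
    have hB : 0 < B := div_pos (by linarith) hD2
    set A := m r - B * r ^ (-γ) with hAdef
    -- the test function
    set a := r^2/2 with hadef
    have ha : 0 < a := by positivity
    set σ : ℝ → ℝ := fun t => a + (t - a) * Real.smoothTransition ((t - a)/(r^2 - a)) with hσdef
    have hra : r^2 - a = a := by rw [hadef]; ring
    have hσpos : ∀ t, 0 < σ t := by
      intro t
      rcases le_or_gt t a with h | h
      · have : Real.smoothTransition ((t - a)/(r^2 - a)) = 0 := by
          apply Real.smoothTransition.zero_of_nonpos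
          rw [hra]
          apply div_nonpos_of_nonpos_of_nonneg <;> linarith
        simp only [hσdef, this, mul_zero, add_zero]; exact ha
      · have h1 : 0 ≤ (t - a) * Real.smoothTransition ((t - a)/(r^2 - a)) :=
          mul_nonneg (by linarith) (Real.smoothTransition.nonneg _)
        simp only [hσdef]; linarith
    have hσeq : ∀ t, r^2 ≤ t → σ t = t := by
      intro t htr
      have h1 : Real.smoothTransition ((t - a)/(r^2 - a)) = 1 := by
        apply Real.smoothTransition.one_of_one_le
        rw [hra, le_div_iff₀ ha]
        linarith
      simp only [hσdef, h1, mul_one]; ring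
    have hσcd : ContDiff ℝ 2 σ := by
      apply ContDiff.add contDiff_const
      apply ContDiff.mul (contDiff_id.sub contDiff_const)
      exact Real.smoothTransition.contDiff.comp ((contDiff_id.sub contDiff_const).div_const _)
    set p : ℝ := -(γ/2) with hpdef
    set φ : EuclideanSpace ℝ (Fin N) → ℝ := fun x => A + B * (σ (‖x‖^2)) ^ p with hφdef
    have hφcd : ContDiff ℝ 2 φ := by
      rw [contDiff_iff_contDiffAt]
      intro x
      apply ContDiffAt.add contDiffAt_const
      apply ContDiffAt.mul contDiffAt_const
      have h1 : ContDiffAt ℝ 2 (fun t : ℝ => t ^ p) (σ (‖x‖^2)) :=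
        Real.contDiffAt_rpow_const_of_ne (ne_of_gt (hσpos _))
      have h2 : ContDiffAt ℝ 2 σ (‖x‖^2) := hσcd.contDiffAt
      have h3 : ContDiffAt ℝ 2 (fun y : EuclideanSpace ℝ (Fin N) => ‖y‖^2) x :=
        (contDiff_norm_sq (𝕜 := ℝ)).contDiffAt
      exact h1.comp x (h2.comp x h3)
    -- rpow conversion
    have hpow : ∀ t : ℝ, 0 ≤ t → ((t^2 : ℝ)) ^ p = t ^ (-γ) := by
      intro t ht
      rw [← Real.rpow_natCast t 2, ← Real.rpow_mul ht]
      congr 1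
      rw [hpdef]
      push_cast
      ring
    have hφrad : ∀ x : EuclideanSpace ℝ (Fin N), r ≤ ‖x‖ → φ x = A + B * ‖x‖ ^ (-γ) := by
      intro x hx
      have h1 : r^2 ≤ ‖x‖^2 := by nlinarith [norm_nonneg x]
      rw [hφdef]
      simp only
      rw [hσeq _ h1, hpow _ (norm_nonneg x)]
    -- min point of u on ball s
    obtain ⟨xs, hxs_le, hxs_val⟩ := hmattain s hs.le
    have hxs_r : r < ‖xs‖ := by
      by_contra hle
      push_neg at hle
      have := hmle r xs hle
      rw [hxs_val] at this
      linarith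
    -- the annulus
    set Ann : Set (EuclideanSpace ℝ (Fin N)) :=
      Metric.closedBall 0 S ∩ {x | r ≤ ‖x‖} with hAnn
    have hAnnC : IsCompact Ann :=
      (isCompact_closedBall _ _).inter_right
        (isClosed_le continuous_const continuous_norm)
    have hxsAnn : xs ∈ Ann := by
      constructor
      · simp only [Metric.mem_closedBall, dist_eq_norm, sub_zero]
        linarith
      · exact le_of_lt hxs_r
    -- u - φ lower semicontinuous
    have hφcont : Continuous φ := hφcd.continuous
    have hfls : LowerSemicontinuous (fun x => u x - φ x) := by
      have h1 : LowerSemicontinuous (fun x : EuclideanSpace ℝ (Fin N) => -φ x) :=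
        (hφcont.neg).lowerSemicontinuous
      have := hlsc.add h1
      simpa [sub_eq_add_neg] using this
    obtain ⟨y, hyAnn, hymin⟩ := lsc_exists_min hfls hAnnC ⟨xs, hxsAnn⟩
    have hyS : ‖y‖ ≤ S := by
      have := hyAnn.1
      simpa [Metric.mem_closedBall, dist_eq_norm] using this
    have hyr : r ≤ ‖y‖ := hyAnn.2
    -- value at xs is negative
    have hφxs : m s < φ xs := by
      rw [hφrad xs hxs_r.le]
      have h1 : s ^ (-γ) ≤ ‖xs‖ ^ (-γ) :=
        rpow_neg_anti (lt_trans hr hxs_r) hxs_le hγpos.le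
      have h2 : B * (r ^ (-γ) - s ^ (-γ)) < m r - m s := by
        rw [hBdef, div_mul_eq_mul_div, div_lt_iff₀ hD2]
        rw [hδdef] at hSsmall
        nlinarith [hSsmall, mul_nonneg hmS0 hD1.le]
      have h3 : A + B * s ^ (-γ) = m r - B * (r ^ (-γ) - s ^ (-γ)) := by
        rw [hAdef]; ring
      nlinarith [h1, h2, h3, hB]
    have hneg : u y - φ y < 0 := by
      have h1 := hymin xs hxsAnn
      have : u xs - φ xs < 0 := by rw [hxs_val]; linarith
      linarith
    -- y is interior
    have hyr' : r < ‖y‖ := by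
      rcases lt_or_eq_of_le hyr with h | h
      · exact h
      · exfalso
        have h1 : m r ≤ u y := hmle r y h.symm.le
        have h2 : φ y = m r := by
          rw [hφrad y hyr, ← h]
          rw [hAdef]; ring
        rw [h2] at hneg
        linarith
    have hyS' : ‖y‖ < S := by
      rcases lt_or_eq_of_le hyS with h | h
      · exact h
      · exfalso
        have h1 : m S ≤ u y := hmle S y h.le
        have h2 : φ y = m S := by
          rw [hφrad y hyr, h]
          have : B * (r ^ (-γ) - S ^ (-γ)) = m r - m S := by
            rw [hBdef]
            field_simp
          rw [hAdef]
          linarith [this]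
        rw [h2] at hneg
        linarith
    -- local min at y
    have hlocmin : IsLocalMinOn (fun x => u x - φ x) Set.univ y := by
      have hε : 0 < min (‖y‖ - r) (S - ‖y‖) := by
        apply lt_min <;> linarith
      unfold IsLocalMinOn IsMinFilter
      rw [nhdsWithin_univ]
      rw [Metric.eventually_nhds_iff]
      refine ⟨min (‖y‖ - r) (S - ‖y‖), hε, ?_⟩
      intro x hx
      apply hymin
      rw [dist_eq_norm] at hx
      have h1 : ‖x‖ - ‖y‖ ≤ ‖x - y‖ := norm_sub_norm_le x y
      have h2 : ‖y‖ - ‖x‖ ≤ ‖x - y‖ := by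
        have := norm_sub_norm_le y x
        rwa [norm_sub_rev] at this
      have hx1 : ‖x - y‖ < ‖y‖ - r := lt_of_lt_of_le hx (min_le_left _ _)
      have hx2 : ‖x - y‖ < S - ‖y‖ := lt_of_lt_of_le hx (min_le_right _ _)
      constructor
      · simp only [Metric.mem_closedBall, dist_eq_norm, sub_zero]
        linarith
      · simp only [Set.mem_setOf_eq]
        linarith
    -- apply the supersolution property
    have happ := hsuper y (Set.mem_univ y) φ hφcd hlocmin
    simp only [add_zero] at happ
    -- compute the Hessian
    have hyn0 : 0 < ‖y‖ := lt_trans hr hyr'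
    set Q : ℝ := ‖y‖^2 with hQdef
    have hQpos : 0 < Q := by positivity
    set c₁ : ℝ := 2 * B * p * Q ^ (p - 1) with hc₁def
    set c₂ : ℝ := 4 * B * p * (p - 1) * Q ^ (p - 2) with hc₂def
    set Y : Fin N → ℝ := fun i => y i with hYdef
    have hφev : ∀ᶠ x in nhds y, φ x = A + B * (‖x‖ ^ 2 : ℝ) ^ p := by
      have hUo : IsOpen {x : EuclideanSpace ℝ (Fin N) | r < ‖x‖} :=
        isOpen_lt continuous_const continuous_norm
      filter_upwards [hUo.mem_nhds hyr'] with x hx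
      have h1 : r^2 ≤ ‖x‖^2 := by nlinarith [norm_nonneg x, le_of_lt hx]
      rw [hφdef]
      simp only
      rw [hσeq _ h1]
    have hhess : hessianMatrix φ y =
        (Matrix.of fun i j => c₁ * (if j = i then 1 else 0) + c₂ * Y i * Y j :
          Matrix (Fin N) (Fin N) ℝ) := by
      funext i j
      rw [hessian_radial φ A B p y hyn0 hφev i j]
      simp only [Matrix.of_apply, hc₁def, hc₂def, hYdef, hQdef]
    -- eigenvalue analysis
    have hc₂pos : 0 < c₂ := by
      rw [hc₂def, hpdef]
      have h1 : (0:ℝ) < Q ^ (-(γ/2) - 2) := Real.rpow_pos_of_pos hQpos _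
      have h2 : (0:ℝ) < B * γ * (γ + 2) * Q ^ (-(γ/2) - 2) :=
        mul_pos (mul_pos (mul_pos hB hγpos) (by linarith)) h1
      linarith [h2]
    have hQsum : ∑ i, Y i * Y i = Q := by
      have h2 : (inner ℝ (y : EuclideanSpace ℝ (Fin N)) y : ℝ) = ‖y‖ ^ 2 :=
        real_inner_self_eq_norm_sq _
      rw [PiLp.inner_apply] at h2
      rw [hQdef, ← h2]
      simp [RCLike.inner_apply, hYdef, sq]
    have hQsumpos : 0 < ∑ i, Y i * Y i := by rw [hQsum]; exact hQpos
    obtain ⟨heigge, j₀, hj₀⟩ := eig_rank_one N Y c₁ c₂ hc₂pos hQsumpos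
    set hM := rank_one_hermitian N Y c₁ c₂
    -- lower bound for Pplus
    have hPlow : (c₁ + c₂ * Q) + ((k:ℝ) - 1) * c₁ ≤ Pplus k (hessianMatrix φ y) := by
      rw [hhess]
      rw [Pplus]
      have hsorted : sortedEig (Matrix.of fun i j => c₁ * (if j = i then 1 else 0) + c₂ * Y i * Y j :
          Matrix (Fin N) (Fin N) ℝ) = hM.eigenvalues ∘ Tuple.sort hM.eigenvalues := by
        rw [sortedEig, dif_pos hM]
      rw [hsorted]
      apply sorted_sum_bound N k (by omega) hkN _ (Tuple.monotone_sort _)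
      · intro i
        exact heigge _
      · refine ⟨(Tuple.sort hM.eigenvalues)⁻¹ j₀, ?_⟩
        simp only [Function.comp_apply, Equiv.Perm.inv_def, Equiv.apply_symm_apply]
        rw [hj₀, hQsum]
    -- positivity
    have hQp2 : Q ^ (p - 1) = Q ^ (p - 2) * Q := by
      have h := Real.rpow_add hQpos (p-2) 1
      rw [Real.rpow_one] at h
      rw [show p - 1 = p - 2 + 1 by ring, h]
    have hXpos : (0:ℝ) < Q ^ (p - 2) := Real.rpow_pos_of_pos hQpos _
    have hfinal : 0 < (c₁ + c₂ * Q) + ((k:ℝ) - 1) * c₁ := by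
      have hcalc : (c₁ + c₂ * Q) + ((k:ℝ) - 1) * c₁
          = B * (Q ^ (p - 2) * Q) * γ * (γ + 2 - (k:ℝ)) := by
        rw [hc₁def, hc₂def, hQp2, hpdef]
        ring
      rw [hcalc]
      have h1 : 0 < γ + 2 - (k:ℝ) := by linarith
      have h2 : 0 < Q ^ (p - 2) * Q := mul_pos hXpos hQpos
      positivity
    linarith
  -- FINISH: general case
  intro r s hr hrs
  rcases eq_or_lt_of_le hrs with rfl | hrs'
  · exact le_refl _
  rcases eq_or_lt_of_le hr with hr0 | hrpos
  · -- r = 0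
    have hs : 0 < s := by rw [← hr0] at hrs'; exact hrs'
    by_cases hk2 : k = 2
    · -- k = 2
      subst hk2
      have he0 : ((2:ℕ):ℝ) - 2 = 0 := by norm_num
      rw [he0, Real.rpow_zero, Real.rpow_zero, mul_one, mul_one]
      rw [← hr0]
      -- goal: m 0 ≤ m s
      have hm00 : m 0 = u 0 := by
        rw [hm 0, Metric.closedBall_zero, Set.image_singleton, csInf_singleton]
      by_contra hcon
      push_neg at hcon
      rw [hm00] at hcon
      -- m s < u 0; use lsc at 0
      set c := (m s + u 0)/2 with hc
      have hcu : c < u 0 := by rw [hc]; linarith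
      have hcs : m s < c := by rw [hc]; linarith
      have hev := hlsc 0 c hcu
      rw [Metric.eventually_nhds_iff] at hev
      obtain ⟨ε, hε, hball⟩ := hev
      set ρ := min (ε/2) s with hρ
      have hρpos : 0 < ρ := lt_min (by linarith) hs
      have hρs : ρ ≤ s := min_le_right _ _
      have hmρs : m ρ ≤ m s := by
        rcases lt_or_eq_of_le hρs with h | h
        · have := key ρ s hρpos h
          rw [he0, Real.rpow_zero, Real.rpow_zero, mul_one, mul_one] at this
          exact this
        · rw [h]
      obtain ⟨xρ, hxρ, hxρval⟩ := hmattain ρ hρpos.le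
      have hdist : dist xρ 0 < ε := by
        rw [dist_eq_norm, sub_zero]
        have : ρ ≤ ε/2 := min_le_left _ _
        linarith
      have := hball hdist
      simp only [gt_iff_lt] at this
      rw [hxρval] at this
      linarith
    · -- k ≥ 3
      have hk3 : 3 ≤ k := by omega
      have hepos : (0:ℝ) < (k:ℝ) - 2 := by
        have : (3:ℝ) ≤ (k:ℝ) := by exact_mod_cast hk3
        linarith
      rw [← hr0, Real.zero_rpow (ne_of_gt hepos), mul_zero]
      exact mul_nonneg (hm0 s hs.le) (Real.rpow_nonneg hs.le _)
  · exact key r s hrpos hrs'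
end

section
/- Hadamard three circles theorem in the half-space: let N and k be positive integers with k < N, and let u be a nonnegative lower semicontinuous function on the closure of ℝ^N_+ which is a viscosity supersolution of P⁺_k(D²u) = 0 in ℝ^N_+. For r > 0 set μ(r) = inf { u(x)/x_N : x ∈ ℝ^N_+, |x| ≤ r }. Then for every 0 < r₁ < r₂ and every r with r₁ ≤ r ≤ r₂, μ(r) ≥ [μ(r₁)(r^{−k} − r₂^{−k}) + μ(r₂)(r₁^{−k} − r^{−k})]/(r₁^{−k} − r₂^{−k}). In particular the map r ↦ μ(r)·r^k is nondecreasing on (0, +∞). -/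
open scoped BigOperators

open Finset in
theorem hadamard_lsc_exists_min {α : Type*} [TopologicalSpace α] {s : Set α}
    (hs : IsCompact s) (hne : s.Nonempty) {f : α → ℝ} (hf : LowerSemicontinuousOn f s) :
    ∃ x ∈ s, ∀ y ∈ s, f x ≤ f y := by
  by_contra hcon
  push_neg at hcon
  -- for every x in s there is y in s with f y < f x
  have hstep : ∀ x ∈ s, ∃ y ∈ s, f y < f x := by
    intro x hx
    obtain ⟨y, hy, hlt⟩ := hcon x hx
    exact ⟨y, hy, hlt⟩
  choose g hgs hglt using hstep
  -- neighborhoods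
  have hnb : ∀ x (hx : x ∈ s), ∃ V : Set α, V ∈ nhds x ∧ ∀ y ∈ V ∩ s, f (g x hx) < f y := by
    intro x hx
    have := hf x hx (f (g x hx)) (hglt x hx)
    rw [Filter.Eventually, ] at this
    rw [mem_nhdsWithin] at this
    obtain ⟨U, hUo, hxU, hU⟩ := this
    exact ⟨U, hUo.mem_nhds hxU, fun y hy => hU hy⟩
  choose V hVnb hVlt using hnb
  obtain ⟨t, hcover⟩ := hs.elim_nhds_subcover' (fun x hx => V x hx) (fun x hx => hVnb x hx)
  have htne : t.Nonempty := by
    rcases hne with ⟨z, hz⟩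
    by_contra hemp
    rw [Finset.not_nonempty_iff_eq_empty] at hemp
    have := hcover hz
    simp [hemp] at this
  obtain ⟨x₀, hx₀t, hx₀min⟩ := t.exists_min_image (fun x => f (g x.1 x.2)) htne
  -- now g x₀ ∈ s is covered
  have hmem := hcover (hgs x₀.1 x₀.2)
  simp only [Set.mem_iUnion] at hmem
  obtain ⟨x₁, hx₁t, hmem⟩ := hmem
  have hlt := hVlt x₁.1 x₁.2 (g x₀.1 x₀.2) ⟨hmem, hgs x₀.1 x₀.2⟩
  have hle := hx₀min x₁ hx₁t
  exact absurd (hle.trans_lt hlt) (lt_irrefl _).elim -- f(g x₀) ≤ f(g x₁) < f (g x₀)?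

open Finset in
theorem hadamard_card_aux (n k : ℕ) (hk : k ≤ n) :
    ∑ i : Fin n, (if n - k ≤ (i : ℕ) then (1:ℝ) else 0) = k := by
  rw [Fin.sum_univ_eq_sum_range (fun j => if n - k ≤ j then (1:ℝ) else 0)]
  rw [← Finset.sum_filter]
  have h1 : Finset.filter (fun j => n - k ≤ j) (Finset.range n) = Finset.Ico (n-k) n := by
    ext j; simp [Finset.mem_Ico, Finset.mem_filter, Finset.mem_range]; omega
  rw [h1]
  rw [Finset.sum_const, Nat.card_Ico]
  have : n - (n - k) = k := by omega
  rw [this]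
  simp

open Finset in
theorem hadamard_majorization {n k : ℕ} (hk : k ≤ n) (hk0 : 0 < k) (w : Fin n → ℝ)
    (c : Fin n → ℝ) (hc0 : ∀ j, 0 ≤ c j) (hc1 : ∀ j, c j ≤ 1) (hsum : ∑ j, c j = k) :
    ∑ j, w j * c j ≤ ∑ i : Fin n, if n - k ≤ (i : ℕ) then (w ∘ Tuple.sort w) i else 0 := by
  have hn0 : 0 < n := lt_of_lt_of_le hk0 hk
  set v := w ∘ Tuple.sort w with hv
  have hmono : Monotone v := Tuple.monotone_sort w
  set θ := v ⟨n - k, by omega⟩ with hθ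
  have key1 : ∑ j, w j * c j = (∑ j, (w j - θ) * c j) + θ * k := by
    rw [← hsum]; rw [Finset.mul_sum]
    rw [← Finset.sum_add_distrib]
    congr 1; ext j; ring
  have key2 : ∀ j, (w j - θ) * c j ≤ max (w j - θ) 0 := by
    intro j
    rcases le_total (w j - θ) 0 with h | h
    · exact le_trans (mul_nonpos_of_nonpos_of_nonneg h (hc0 j)) (le_max_right _ _)
    · have h2 : (w j - θ) * c j ≤ (w j - θ) * 1 := mul_le_mul_of_nonneg_left (hc1 j) h
      rw [mul_one] at h2
      exact h2.trans (le_max_left _ _)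
  have key3 : ∑ j, max (w j - θ) 0 = ∑ i : Fin n, max (v i - θ) 0 :=
    (Equiv.sum_comp (Tuple.sort w) (fun t => max (w t - θ) 0)).symm
  have key4 : ∀ i : Fin n, max (v i - θ) 0 = if n - k ≤ (i:ℕ) then v i - θ else 0 := by
    intro i
    by_cases h : n - k ≤ (i : ℕ)
    · rw [if_pos h, max_eq_left]
      have h3 : θ ≤ v i := hmono (show (⟨n - k, by omega⟩ : Fin n) ≤ i from by
        rw [Fin.le_def]; exact h)
      linarith
    · rw [if_neg h, max_eq_right]
      push_neg at h
      have h3 : v i ≤ θ := hmono (show i ≤ (⟨n - k, by omega⟩ : Fin n) from by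
        rw [Fin.le_def]; exact Nat.le_of_lt h)
      linarith
  have key5 : ∑ i : Fin n, (if n - k ≤ (i:ℕ) then v i - θ else 0)
      = (∑ i : Fin n, if n - k ≤ (i:ℕ) then v i else 0) - θ * k := by
    rw [← hadamard_card_aux n k hk]
    rw [Finset.mul_sum, ← Finset.sum_sub_distrib]
    congr 1; ext i
    by_cases h : n - k ≤ (i:ℕ) <;> simp [h]
  have key6 : ∑ j, (w j - θ) * c j ≤ (∑ i : Fin n, if n - k ≤ (i:ℕ) then v i else 0) - θ * k := by
    calc ∑ j, (w j - θ) * c j ≤ ∑ j, max (w j - θ) 0 := Finset.sum_le_sum (fun j _ => key2 j)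
      _ = ∑ i : Fin n, max (v i - θ) 0 := key3
      _ = ∑ i : Fin n, (if n - k ≤ (i:ℕ) then v i - θ else 0) :=
          Finset.sum_congr rfl (fun i _ => key4 i)
      _ = _ := key5
  rw [key1]
  linarith

open Finset in
theorem hadamard_quadform_eigen {n : ℕ} {X : Matrix (Fin n) (Fin n) ℝ} (hX : X.IsHermitian)
    (v : EuclideanSpace ℝ (Fin n)) :
    ∑ a : Fin n, ∑ d : Fin n, v a * X a d * v d
      = ∑ m : Fin n, hX.eigenvalues m * (inner ℝ (hX.eigenvectorBasis m) v : ℝ)^2 := by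
  set b := hX.eigenvectorBasis with hb
  set lam := hX.eigenvalues with hlam
  set c : Fin n → ℝ := fun m => (inner ℝ (b m) v : ℝ) with hc
  have hrepr : ∀ idx, v idx = ∑ m, c m * (b m) idx := by
    intro idx
    have h0 := b.sum_repr' v
    have h1 : (∑ m, (inner ℝ (b m) v : ℝ) • (b m)) idx = v idx := by rw [h0]
    rw [← h1]
    clear h1 h0
    induction (Finset.univ : Finset (Fin n)) using Finset.induction_on with
    | empty => simp
    | insert a s hnotmem ih =>
        rw [Finset.sum_insert hnotmem, Finset.sum_insert hnotmem, ← ih]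
        rfl
  have heig : ∀ m idx, ∑ d, X idx d * (b m) d = lam m * (b m) idx := by
    intro m idx
    have h0 := hX.mulVec_eigenvectorBasis m
    have h1 := congrFun h0 idx
    simpa [Matrix.mulVec, dotProduct] using h1
  have hinner : ∀ m, ∑ a, (b m) a * v a = c m := by
    intro m
    rw [hc]
    simp only [PiLp.inner_apply, RCLike.inner_apply, starRingEnd_apply, star_trivial]
    exact Finset.sum_congr rfl (fun _ _ => mul_comm _ _)
  have hA : ∀ a, ∑ d, v a * X a d * v d = ∑ m, c m * lam m * ((b m) a * v a) := by
    intro a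
    have h2 : ∑ d, X a d * v d = ∑ m, c m * (lam m * (b m) a) := by
      calc ∑ d, X a d * v d = ∑ d, X a d * (∑ m, c m * (b m) d) := by
            refine Finset.sum_congr rfl (fun d _ => ?_)
            rw [← hrepr d]
        _ = ∑ d, ∑ m, c m * (X a d * (b m) d) := by
            refine Finset.sum_congr rfl (fun d _ => ?_)
            rw [Finset.mul_sum]
            refine Finset.sum_congr rfl (fun m _ => by ring)
        _ = ∑ m, ∑ d, c m * (X a d * (b m) d) := Finset.sum_comm
        _ = ∑ m, c m * (lam m * (b m) a) := by
            refine Finset.sum_congr rfl (fun m _ => ?_)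
            rw [← Finset.mul_sum, heig m a]
    calc ∑ d, v a * X a d * v d = v a * ∑ d, X a d * v d := by
          rw [Finset.mul_sum]
          exact Finset.sum_congr rfl (fun d _ => by ring)
      _ = v a * ∑ m, c m * (lam m * (b m) a) := by rw [h2]
      _ = ∑ m, c m * lam m * ((b m) a * v a) := by
          rw [Finset.mul_sum]
          exact Finset.sum_congr rfl (fun m _ => by ring)
  calc ∑ a : Fin n, ∑ d : Fin n, v a * X a d * v d
      = ∑ a : Fin n, ∑ m, c m * lam m * ((b m) a * v a) :=
        Finset.sum_congr rfl (fun a _ => hA a)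
    _ = ∑ m, ∑ a, c m * lam m * ((b m) a * v a) := Finset.sum_comm
    _ = ∑ m, c m * lam m * (∑ a, (b m) a * v a) := by
        refine Finset.sum_congr rfl (fun m _ => ?_)
        rw [← Finset.mul_sum]
    _ = ∑ m, lam m * (inner ℝ (b m) v : ℝ)^2 := by
        refine Finset.sum_congr rfl (fun m _ => ?_)
        rw [hinner m, hc]; ring

open Finset in
theorem hadamard_sum_quadform_le_Pplus {n K : ℕ} (hK : K ≤ n) (hK0 : 0 < K)
    {X : Matrix (Fin n) (Fin n) ℝ} (hX : X.IsHermitian)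
    (w : Fin K → EuclideanSpace ℝ (Fin n)) (hw : Orthonormal ℝ w) :
    ∑ i : Fin K, ∑ a : Fin n, ∑ d : Fin n, w i a * X a d * w i d ≤ Pplus K X := by
  set b := hX.eigenvectorBasis with hb
  set lam := hX.eigenvalues with hlam
  set c : Fin n → ℝ := fun m => ∑ i : Fin K, (inner ℝ (b m) (w i) : ℝ)^2 with hc
  have hParseval : ∀ x : EuclideanSpace ℝ (Fin n), ∑ m, (inner ℝ (b m) x : ℝ)^2 = ‖x‖^2 := by
    intro x
    have h0 := b.sum_inner_mul_inner x x
    have h1 : ∀ m, (inner ℝ x (b m) : ℝ) * (inner ℝ (b m) x : ℝ) = (inner ℝ (b m) x : ℝ)^2 := by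
      intro m
      rw [real_inner_comm x (b m)]; ring
    rw [Finset.sum_congr rfl (fun m _ => h1 m)] at h0
    rw [h0, real_inner_self_eq_norm_sq]
  have hLHS : ∑ i : Fin K, ∑ a : Fin n, ∑ d : Fin n, w i a * X a d * w i d
      = ∑ m, lam m * c m := by
    calc ∑ i : Fin K, ∑ a : Fin n, ∑ d : Fin n, w i a * X a d * w i d
        = ∑ i : Fin K, ∑ m, lam m * (inner ℝ (b m) (w i) : ℝ)^2 :=
          Finset.sum_congr rfl (fun i _ => hadamard_quadform_eigen hX (w i))
      _ = ∑ m, ∑ i : Fin K, lam m * (inner ℝ (b m) (w i) : ℝ)^2 := Finset.sum_comm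
      _ = ∑ m, lam m * c m := by
          refine Finset.sum_congr rfl (fun m _ => ?_)
          rw [hc, Finset.mul_sum]
  rw [hLHS]
  have hPp : Pplus K X = ∑ i : Fin n, if n - K ≤ (i : ℕ) then (lam ∘ Tuple.sort lam) i else 0 := by
    rw [Pplus]
    congr 1
    ext i
    rw [sortedEig, dif_pos hX]
  rw [hPp]
  refine hadamard_majorization hK hK0 lam c (fun j => ?_) (fun j => ?_) ?_
  · exact Finset.sum_nonneg (fun i _ => sq_nonneg _)
  · have h0 := hw.sum_inner_products_le (b j) (s := Finset.univ)
    have h1 : ∀ i : Fin K, ‖(inner ℝ (w i) (b j) : ℝ)‖^2 = (inner ℝ (b j) (w i) : ℝ)^2 := by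
      intro i
      rw [Real.norm_eq_abs, sq_abs, real_inner_comm]
    rw [Finset.sum_congr rfl (fun i _ => h1 i)] at h0
    have h2 : ‖b j‖ = 1 := b.orthonormal.1 j
    rw [hc]
    calc ∑ i : Fin K, (inner ℝ (b j) (w i) : ℝ)^2 ≤ ‖b j‖^2 := h0
      _ = 1 := by rw [h2]; norm_num
  · calc ∑ m, c m = ∑ m, ∑ i : Fin K, (inner ℝ (b m) (w i) : ℝ)^2 := rfl
      _ = ∑ i : Fin K, ∑ m, (inner ℝ (b m) (w i) : ℝ)^2 := Finset.sum_comm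
      _ = ∑ i : Fin K, ‖w i‖^2 := Finset.sum_congr rfl (fun i _ => hParseval (w i))
      _ = ∑ i : Fin K, (1:ℝ) := Finset.sum_congr rfl (fun i _ => by rw [hw.1 i]; norm_num)
      _ = K := by simp

noncomputable def hadamard_barG (a b c p q s : ℝ) : ℝ := a + b * s ^ p + c * s ^ q

noncomputable def hadamard_barG1 (b c p q s : ℝ) : ℝ :=
  hadamard_barG 0 (b*p) (c*q) (p-1) (q-1) s

noncomputable def hadamard_barG2 (b c p q s : ℝ) : ℝ :=
  hadamard_barG1 (b*p) (c*q) (p-1) (q-1) s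

theorem hadamard_barG1_eq (b c p q s : ℝ) :
    hadamard_barG1 b c p q s = b * p * s ^ (p-1) + c * q * s ^ (q-1) := by
  simp [hadamard_barG1, hadamard_barG]

theorem hadamard_barG2_eq (b c p q s : ℝ) :
    hadamard_barG2 b c p q s = b * p * (p-1) * s ^ (p-2) + c * q * (q-1) * s ^ (q-2) := by
  simp only [hadamard_barG2, hadamard_barG1, hadamard_barG]
  rw [show p - 1 - 1 = p - 2 from by ring, show q - 1 - 1 = q - 2 from by ring]
  ring

noncomputable def hadamard_Phi {N : ℕ} (ℓ : Fin N) (a b c p q : ℝ)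
    (x : EuclideanSpace ℝ (Fin N)) : ℝ :=
  x ℓ * hadamard_barG a b c p q (‖x‖^2)

section deriv
variable {N : ℕ} (ℓ : Fin N) (a b c p q : ℝ)

theorem hadamard_hasFDerivAt_nsq (y : EuclideanSpace ℝ (Fin N)) :
    HasFDerivAt (fun y : EuclideanSpace ℝ (Fin N) => ‖y‖^2) ((2:ℝ) • (innerSL ℝ y)) y := by
  have h := (hasFDerivAt_id y).norm_sq
  convert h using 1 <;> ext w <;> simp

theorem hadamard_hasFDerivAt_barG {y : EuclideanSpace ℝ (Fin N)} (hy : y ≠ 0) :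
    HasFDerivAt (fun y : EuclideanSpace ℝ (Fin N) => hadamard_barG a b c p q (‖y‖^2))
      ((2 * hadamard_barG1 b c p q (‖y‖^2)) • innerSL ℝ y) y := by
  have hs : ‖y‖^2 ≠ 0 := pow_ne_zero _ (norm_ne_zero_iff.mpr hy)
  have hp : HasFDerivAt (fun y : EuclideanSpace ℝ (Fin N) => (‖y‖^2) ^ p)
      ((p * (‖y‖^2) ^ (p-1)) • ((2:ℝ) • (innerSL ℝ y))) y :=
    by have := (Real.hasDerivAt_rpow_const (x := ‖y‖^2) (p := p) (Or.inl hs)).comp_hasFDerivAt y (hadamard_hasFDerivAt_nsq y); exact this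
  have hq : HasFDerivAt (fun y : EuclideanSpace ℝ (Fin N) => (‖y‖^2) ^ q)
      ((q * (‖y‖^2) ^ (q-1)) • ((2:ℝ) • (innerSL ℝ y))) y :=
    by have := (Real.hasDerivAt_rpow_const (x := ‖y‖^2) (p := q) (Or.inl hs)).comp_hasFDerivAt y (hadamard_hasFDerivAt_nsq y); exact this
  have h := ((hasFDerivAt_const a y).add (hp.const_mul b)).add (hq.const_mul c)
  have heq : (0 + b • (p * (‖y‖^2) ^ (p-1)) • ((2:ℝ) • (innerSL ℝ y))
      + c • (q * (‖y‖^2) ^ (q-1)) • ((2:ℝ) • (innerSL ℝ y)))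
      = (2 * hadamard_barG1 b c p q (‖y‖^2)) • innerSL ℝ y := by
    ext w
    rw [hadamard_barG1_eq]
    simp [ContinuousLinearMap.smul_apply]
    ring
  rw [heq] at h
  exact h

theorem hadamard_hasFDerivAt_Phi {y : EuclideanSpace ℝ (Fin N)} (hy : y ≠ 0) :
    HasFDerivAt (hadamard_Phi ℓ a b c p q)
      ((hadamard_barG a b c p q (‖y‖^2)) • (EuclideanSpace.proj ℓ)
        + (2 * y ℓ * hadamard_barG1 b c p q (‖y‖^2)) • innerSL ℝ y) y := by
  have hcoord : HasFDerivAt (fun y : EuclideanSpace ℝ (Fin N) => y ℓ)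
      (EuclideanSpace.proj (𝕜 := ℝ) ℓ) y :=
    (EuclideanSpace.proj (𝕜 := ℝ) ℓ).hasFDerivAt
  have h := hcoord.mul (hadamard_hasFDerivAt_barG a b c p q hy)
  refine HasFDerivAt.congr_fderiv (f := hadamard_Phi ℓ a b c p q) h ?_
  ext w
  simp [ContinuousLinearMap.smul_apply]
  ring

theorem hadamard_fderiv_Phi_apply {y : EuclideanSpace ℝ (Fin N)} (hy : y ≠ 0)
    (v : EuclideanSpace ℝ (Fin N)) :
    fderiv ℝ (hadamard_Phi ℓ a b c p q) y v
      = v ℓ * hadamard_barG a b c p q (‖y‖^2)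
        + 2 * y ℓ * hadamard_barG1 b c p q (‖y‖^2) * (inner ℝ y v : ℝ) := by
  rw [(hadamard_hasFDerivAt_Phi ℓ a b c p q hy).fderiv]
  simp [ContinuousLinearMap.smul_apply]
  ring

theorem hadamard_contDiffAt_Phi {y : EuclideanSpace ℝ (Fin N)} (hy : y ≠ 0) :
    ContDiffAt ℝ 2 (hadamard_Phi ℓ a b c p q) y := by
  have hs : ‖y‖^2 ≠ 0 := pow_ne_zero _ (norm_ne_zero_iff.mpr hy)
  have h1 : ContDiffAt ℝ 2 (fun y : EuclideanSpace ℝ (Fin N) => ‖y‖^2) y :=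
    (contDiff_norm_sq ℝ).contDiffAt
  have hp : ContDiffAt ℝ 2 (fun y : EuclideanSpace ℝ (Fin N) => (‖y‖^2) ^ p) y :=
    h1.rpow_const_of_ne hs
  have hq : ContDiffAt ℝ 2 (fun y : EuclideanSpace ℝ (Fin N) => (‖y‖^2) ^ q) y :=
    h1.rpow_const_of_ne hs
  have hcoord : ContDiffAt ℝ 2 (fun y : EuclideanSpace ℝ (Fin N) => y ℓ) y :=
    ((EuclideanSpace.proj (𝕜 := ℝ) (ι := Fin N) ℓ).contDiff (n := 2)).contDiffAt
  exact hcoord.mul ((contDiffAt_const.add (contDiffAt_const.mul hp)).add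
    (contDiffAt_const.mul hq))

end deriv

open Filter in
theorem hadamard_hessian_Phi {N : ℕ} (ℓ : Fin N) (a b c p q : ℝ)
    {x : EuclideanSpace ℝ (Fin N)} (hx : x ≠ 0) (i j : Fin N) :
    hessianMatrix (hadamard_Phi ℓ a b c p q) x i j =
      2 * hadamard_barG1 b c p q (‖x‖^2) *
          ((if ℓ = j then 1 else 0) * x i + (if ℓ = i then 1 else 0) * x j)
        + 4 * x ℓ * hadamard_barG2 b c p q (‖x‖^2) * (x i * x j)
        + 2 * x ℓ * hadamard_barG1 b c p q (‖x‖^2) * (if j = i then 1 else 0) := by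
  have hC : ContDiffAt ℝ 2 (hadamard_Phi ℓ a b c p q) x := hadamard_contDiffAt_Phi ℓ a b c p q hx
  have hdiff : DifferentiableAt ℝ (fderiv ℝ (hadamard_Phi ℓ a b c p q)) x := by
    have h1 : ContDiffAt ℝ 1 (fderiv ℝ (hadamard_Phi ℓ a b c p q)) x :=
      hC.fderiv_right (by norm_num)
    exact h1.differentiableAt (by norm_num)
  have step1 : hessianMatrix (hadamard_Phi ℓ a b c p q) x i j
      = fderiv ℝ (fderiv ℝ (hadamard_Phi ℓ a b c p q)) x (EuclideanSpace.single i 1)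
          (EuclideanSpace.single j 1) := by
    show iteratedFDeriv ℝ 2 (hadamard_Phi ℓ a b c p q) x
        ![EuclideanSpace.single i 1, EuclideanSpace.single j 1] = _
    rw [iteratedFDeriv_two_apply]
    simp
  have step2 : fderiv ℝ (fderiv ℝ (hadamard_Phi ℓ a b c p q)) x (EuclideanSpace.single i 1)
          (EuclideanSpace.single j 1)
      = fderiv ℝ (fun y => fderiv ℝ (hadamard_Phi ℓ a b c p q) y
          (EuclideanSpace.single j 1)) x (EuclideanSpace.single i 1) := by
    rw [fderiv_clm_apply hdiff (differentiableAt_const (EuclideanSpace.single j 1))]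
    simp
  set F : EuclideanSpace ℝ (Fin N) → ℝ := fun y =>
    (if ℓ = j then (1:ℝ) else 0) * hadamard_barG a b c p q (‖y‖^2)
      + 2 * y ℓ * hadamard_barG1 b c p q (‖y‖^2) * y j with hF
  have step3 : fderiv ℝ (fun y => fderiv ℝ (hadamard_Phi ℓ a b c p q) y
      (EuclideanSpace.single j 1)) x = fderiv ℝ F x := by
    apply Filter.EventuallyEq.fderiv_eq
    have hopen : ∀ᶠ y in nhds x, y ≠ (0 : EuclideanSpace ℝ (Fin N)) :=
      (isOpen_compl_singleton).eventually_mem hx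
    refine hopen.mono (fun y hy => ?_)
    show (fderiv ℝ (hadamard_Phi ℓ a b c p q) y) (EuclideanSpace.single j 1) = F y
    rw [hadamard_fderiv_Phi_apply ℓ a b c p q hy, hF]
    rw [EuclideanSpace.inner_single_right, EuclideanSpace.single_apply]
    simp
  -- now compute fderiv F x
  have hG := hadamard_hasFDerivAt_barG (N := N) a b c p q hx
  have hG1 : HasFDerivAt (fun y : EuclideanSpace ℝ (Fin N) =>
      hadamard_barG1 b c p q (‖y‖^2))
      ((2 * hadamard_barG2 b c p q (‖x‖^2)) • innerSL ℝ x) x :=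
    hadamard_hasFDerivAt_barG (N := N) 0 (b*p) (c*q) (p-1) (q-1) hx
  have hcoordl : HasFDerivAt (fun y : EuclideanSpace ℝ (Fin N) => y ℓ)
      (EuclideanSpace.proj (𝕜 := ℝ) ℓ) x := (EuclideanSpace.proj (𝕜 := ℝ) ℓ).hasFDerivAt
  have hcoordj : HasFDerivAt (fun y : EuclideanSpace ℝ (Fin N) => y j)
      (EuclideanSpace.proj (𝕜 := ℝ) j) x := (EuclideanSpace.proj (𝕜 := ℝ) j).hasFDerivAt
  have hT1 := hG.const_mul (if ℓ = j then (1:ℝ) else 0)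
  have hT2a := hcoordl.const_mul (2:ℝ)
  have hT2b := hT2a.mul hG1
  have hT2 := hT2b.mul hcoordj
  have hFd := hT1.add hT2
  rw [step1, step2, step3, HasFDerivAt.fderiv (f := F) hFd]
  have hproj : ∀ (m m' : Fin N), (EuclideanSpace.proj (𝕜 := ℝ) m)
      ((EuclideanSpace.single m' (1:ℝ))) = if m = m' then (1:ℝ) else 0 := by
    intro m m'
    have : (EuclideanSpace.proj (𝕜 := ℝ) m) ((EuclideanSpace.single m' (1:ℝ)))
        = (EuclideanSpace.single m' (1:ℝ)) m := rfl
    rw [this, EuclideanSpace.single_apply]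
  have hinner : (inner ℝ x (EuclideanSpace.single i (1:ℝ)) : ℝ) = x i := by
    rw [EuclideanSpace.inner_single_right]
    simp
  simp only [ContinuousLinearMap.add_apply, ContinuousLinearMap.smul_apply,
    innerSL_apply_apply, hproj, smul_eq_mul, Pi.mul_apply]
  rw [hinner]
  ring

open Finset in
theorem hadamard_delta_sum {N : ℕ} (ℓ : Fin N) (f : Fin N → ℝ) :
    ∑ j : Fin N, (if ℓ = j then (1:ℝ) else 0) * f j = f ℓ := by
  have h : ∀ j : Fin N, (if ℓ = j then (1:ℝ) else 0) * f j = if ℓ = j then f j else 0 := by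
    intro j; split <;> simp
  rw [Finset.sum_congr rfl (fun j _ => h j), Finset.sum_ite_eq]
  simp

open Finset in
theorem hadamard_quadform_Phi {N : ℕ} (ℓ : Fin N) (a b c p q : ℝ)
    {x : EuclideanSpace ℝ (Fin N)} (hx : x ≠ 0) (v : EuclideanSpace ℝ (Fin N)) :
    ∑ i : Fin N, ∑ j : Fin N, v i * hessianMatrix (hadamard_Phi ℓ a b c p q) x i j * v j
      = 4 * hadamard_barG1 b c p q (‖x‖^2) * (∑ m, x m * v m) * v ℓ
        + 4 * x ℓ * hadamard_barG2 b c p q (‖x‖^2) * (∑ m, x m * v m)^2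
        + 2 * x ℓ * hadamard_barG1 b c p q (‖x‖^2) * (∑ m, v m * v m) := by
  set G1 := hadamard_barG1 b c p q (‖x‖^2) with hG1
  set G2 := hadamard_barG2 b c p q (‖x‖^2) with hG2
  have hentry : ∀ i j, v i * hessianMatrix (hadamard_Phi ℓ a b c p q) x i j * v j
      = 2*G1*((if ℓ = j then (1:ℝ) else 0) * ((x i * v i) * v j))
        + 2*G1*((if ℓ = i then (1:ℝ) else 0) * ((x j * v j) * v i))
        + 4*(x ℓ)*G2*((x i * v i) * (x j * v j))
        + 2*(x ℓ)*G1*((if j = i then (1:ℝ) else 0) * (v i * v j)) := by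
    intro i j
    rw [hadamard_hessian_Phi ℓ a b c p q hx i j]
    ring
  calc ∑ i : Fin N, ∑ j : Fin N, v i * hessianMatrix (hadamard_Phi ℓ a b c p q) x i j * v j
      = ∑ i : Fin N, ∑ j : Fin N,
          (2*G1*((if ℓ = j then (1:ℝ) else 0) * ((x i * v i) * v j))
          + 2*G1*((if ℓ = i then (1:ℝ) else 0) * ((x j * v j) * v i))
          + 4*(x ℓ)*G2*((x i * v i) * (x j * v j))
          + 2*(x ℓ)*G1*((if j = i then (1:ℝ) else 0) * (v i * v j))) :=
        Finset.sum_congr rfl (fun i _ => Finset.sum_congr rfl (fun j _ => hentry i j))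
    _ = (∑ i : Fin N, ∑ j : Fin N, 2*G1*((if ℓ = j then (1:ℝ) else 0) * ((x i * v i) * v j)))
        + (∑ i : Fin N, ∑ j : Fin N, 2*G1*((if ℓ = i then (1:ℝ) else 0) * ((x j * v j) * v i)))
        + (∑ i : Fin N, ∑ j : Fin N, 4*(x ℓ)*G2*((x i * v i) * (x j * v j)))
        + (∑ i : Fin N, ∑ j : Fin N, 2*(x ℓ)*G1*((if j = i then (1:ℝ) else 0) * (v i * v j))) := by
        simp [Finset.sum_add_distrib]
    _ = 4 * G1 * (∑ m, x m * v m) * v ℓ + 4 * x ℓ * G2 * (∑ m, x m * v m)^2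
          + 2 * x ℓ * G1 * (∑ m, v m * v m) := by
        have hA : ∑ i : Fin N, ∑ j : Fin N, 2*G1*((if ℓ = j then (1:ℝ) else 0) * ((x i * v i) * v j))
            = 2*G1*((∑ m, x m * v m) * v ℓ) := by
          have h1 : ∀ i, ∑ j : Fin N, 2*G1*((if ℓ = j then (1:ℝ) else 0) * ((x i * v i) * v j))
              = 2*G1*((x i * v i) * v ℓ) := by
            intro i
            rw [← Finset.mul_sum]
            congr 1
            have h2 : ∀ j : Fin N, (if ℓ = j then (1:ℝ) else 0) * ((x i * v i) * v j)
                = (if ℓ = j then (1:ℝ) else 0) * ((fun j' => (x i * v i) * v j') j) := fun j => rfl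
            rw [hadamard_delta_sum ℓ (fun j' => (x i * v i) * v j')]
          rw [Finset.sum_congr rfl (fun i _ => h1 i), ← Finset.mul_sum, ← Finset.sum_mul]
        have hB : ∑ i : Fin N, ∑ j : Fin N, 2*G1*((if ℓ = i then (1:ℝ) else 0) * ((x j * v j) * v i))
            = 2*G1*((∑ m, x m * v m) * v ℓ) := by
          have h1 : ∀ i, ∑ j : Fin N, 2*G1*((if ℓ = i then (1:ℝ) else 0) * ((x j * v j) * v i))
              = 2*G1*((if ℓ = i then (1:ℝ) else 0) * ((∑ m, x m * v m) * v i)) := by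
            intro i
            rw [← Finset.mul_sum]
            congr 1
            rw [← Finset.mul_sum]
            congr 1
            rw [← Finset.sum_mul]
          rw [Finset.sum_congr rfl (fun i _ => h1 i), ← Finset.mul_sum]
          congr 1
          rw [hadamard_delta_sum ℓ (fun i => (∑ m, x m * v m) * v i)]
        have hC : ∑ i : Fin N, ∑ j : Fin N, 4*(x ℓ)*G2*((x i * v i) * (x j * v j))
            = 4*(x ℓ)*G2*(∑ m, x m * v m)^2 := by
          have h1 : ∀ i, ∑ j : Fin N, 4*(x ℓ)*G2*((x i * v i) * (x j * v j))
              = 4*(x ℓ)*G2*((x i * v i) * (∑ m, x m * v m)) := by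
            intro i
            rw [← Finset.mul_sum, ← Finset.mul_sum]
          rw [Finset.sum_congr rfl (fun i _ => h1 i), ← Finset.mul_sum, ← Finset.sum_mul]
          ring
        have hD : ∑ i : Fin N, ∑ j : Fin N, 2*(x ℓ)*G1*((if j = i then (1:ℝ) else 0) * (v i * v j))
            = 2*(x ℓ)*G1*(∑ m, v m * v m) := by
          have h1 : ∀ i, ∑ j : Fin N, 2*(x ℓ)*G1*((if j = i then (1:ℝ) else 0) * (v i * v j))
              = 2*(x ℓ)*G1*(v i * v i) := by
            intro i
            rw [← Finset.mul_sum]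
            congr 1
            have h2 : ∀ j : Fin N, (if j = i then (1:ℝ) else 0) * (v i * v j)
                = if j = i then v i * v j else 0 := by
              intro j; split <;> simp
            rw [Finset.sum_congr rfl (fun j _ => h2 j), Finset.sum_ite_eq']
            simp
          rw [Finset.sum_congr rfl (fun i _ => h1 i), ← Finset.mul_sum]
        rw [hA, hB, hC, hD]
        ring

theorem hadamard_hessian_isHermitian {N : ℕ} (ℓ : Fin N) (a b c p q : ℝ)
    {x : EuclideanSpace ℝ (Fin N)} (hx : x ≠ 0) :
    (hessianMatrix (hadamard_Phi ℓ a b c p q) x).IsHermitian := by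
  rw [Matrix.IsHermitian]
  ext i j
  rw [Matrix.conjTranspose_apply, star_trivial]
  rw [hadamard_hessian_Phi ℓ a b c p q hx j i, hadamard_hessian_Phi ℓ a b c p q hx i j]
  rw [show (if i = j then (1:ℝ) else 0) = (if j = i then (1:ℝ) else 0) from by
    by_cases h : i = j <;> simp [h, Ne.symm, eq_comm]]
  ring

open Finset in
theorem hadamard_innersum {N : ℕ} (u v : EuclideanSpace ℝ (Fin N)) :
    (inner ℝ u v : ℝ) = ∑ m, u m * v m := by
  simp [PiLp.inner_apply, RCLike.inner_apply, starRingEnd_apply]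
  exact Finset.sum_congr rfl (fun _ _ => mul_comm _ _)

open Finset Submodule in
theorem hadamard_pplus_pos {N k : ℕ} (hk0 : 0 < k) (hkN : k < N) (ℓ : Fin N) (a b c : ℝ)
    (hc : 0 < c) {x : EuclideanSpace ℝ (Fin N)} (hxl : 0 < x ℓ) :
    0 < Pplus k (hessianMatrix (hadamard_Phi ℓ a b c (-(k:ℝ)/2) (-(k:ℝ))) x) := by
  classical
  have hx : x ≠ 0 := by
    intro h
    rw [h] at hxl
    simp at hxl
  have hn : ‖x‖ ≠ 0 := norm_ne_zero_iff.mpr hx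
  have hs : (0:ℝ) < ‖x‖^2 := pow_pos (norm_pos_iff.mpr hx) 2
  set eN : EuclideanSpace ℝ (Fin N) := EuclideanSpace.single ℓ 1 with heN
  set S := (Submodule.span ℝ ({x, eN} : Set (EuclideanSpace ℝ (Fin N))))ᗮ with hSdef
  have hxS : ∀ v ∈ S, (inner ℝ x v : ℝ) = 0 := by
    intro v hv
    exact hv x (Submodule.subset_span (by simp))
  have hlS : ∀ v ∈ S, v ℓ = 0 := by
    intro v hv
    have h1 : (inner ℝ eN v : ℝ) = 0 := hv eN (Submodule.subset_span (by simp))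
    rw [heN, EuclideanSpace.inner_single_left] at h1
    simpa using h1
  have hcard : Module.finrank ℝ (EuclideanSpace ℝ (Fin N)) = N := by
    simp [finrank_euclideanSpace]
  have hspan_le : Module.finrank ℝ (Submodule.span ℝ ({x, eN} : Set (EuclideanSpace ℝ (Fin N)))) ≤ 2 := by
    have h0 : ({x, eN} : Set (EuclideanSpace ℝ (Fin N))) = ↑({x, eN} : Finset (EuclideanSpace ℝ (Fin N))) := by
      simp
    rw [h0]
    refine le_trans (finrank_span_finset_le_card _) ?_
    exact le_trans (Finset.card_insert_le _ _) (by simp)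
  have hdim : k - 1 ≤ Module.finrank ℝ S := by
    have h3 := Submodule.finrank_add_finrank_orthogonal
      (K := Submodule.span ℝ ({x, eN} : Set (EuclideanSpace ℝ (Fin N))))
    rw [hcard] at h3
    rw [← hSdef] at h3
    omega
  obtain ⟨k', rfl⟩ : ∃ k', k = k' + 1 := ⟨k - 1, by omega⟩
  have hdim' : k' ≤ Module.finrank ℝ S := le_trans (by omega) hdim
  set ob := stdOrthonormalBasis ℝ S with hob
  set f : Fin k' → EuclideanSpace ℝ (Fin N) := fun m => ((ob (Fin.castLE hdim' m)) : EuclideanSpace ℝ (Fin N)) with hf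
  have hfS : ∀ m, f m ∈ S := fun m => (ob (Fin.castLE hdim' m)).2
  have hff : ∀ m m', (inner ℝ (f m) (f m') : ℝ) = if m = m' then 1 else 0 := by
    intro m m'
    have h1 : (inner ℝ (f m) (f m') : ℝ) = (inner ℝ (ob (Fin.castLE hdim' m)) (ob (Fin.castLE hdim' m')) : ℝ) :=
      (Submodule.coe_inner S _ _).symm
    rw [h1, orthonormal_iff_ite.mp ob.orthonormal]
    simp [Fin.castLE_inj]
  set v0 : EuclideanSpace ℝ (Fin N) := ‖x‖⁻¹ • x with hv0def
  have hv0coord : ∀ m, v0 m = ‖x‖⁻¹ * x m := fun m => rfl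
  have hxx : ∑ m, x m * x m = ‖x‖^2 := by
    rw [← hadamard_innersum, real_inner_self_eq_norm_sq]
  have hv0v0 : (inner ℝ v0 v0 : ℝ) = 1 := by
    rw [hv0def, real_inner_smul_left, real_inner_smul_right, real_inner_self_eq_norm_sq,
      pow_two]
    field_simp
  have hv0f : ∀ m, (inner ℝ v0 (f m) : ℝ) = 0 := by
    intro m
    rw [hv0def, real_inner_smul_left, hxS (f m) (hfS m), mul_zero]
  set w : Fin (k' + 1) → EuclideanSpace ℝ (Fin N) := Fin.cons v0 f with hw
  have hworth : Orthonormal ℝ w := by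
    rw [orthonormal_iff_ite]
    intro i j
    induction i using Fin.cases with
    | zero =>
        induction j using Fin.cases with
        | zero => simpa [hw, Fin.cons_zero] using hv0v0
        | succ m =>
            have := hv0f m
            simp [hw, Fin.cons_zero, Fin.cons_succ, (Fin.succ_ne_zero m).symm, this]
    | succ m =>
        induction j using Fin.cases with
        | zero =>
            have h1 : (inner ℝ (f m) v0 : ℝ) = 0 := by
              rw [real_inner_comm]; exact hv0f m
            simp [hw, Fin.cons_zero, Fin.cons_succ, Fin.succ_ne_zero m, h1]
        | succ m' =>
            have := hff m m'
            simp [hw, Fin.cons_succ, this, Fin.succ_inj]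
  -- quadratic form values
  set G1 := hadamard_barG1 b c (-((k':ℝ)+1)/2) (-((k':ℝ)+1)) (‖x‖^2) with hG1def
  set G2 := hadamard_barG2 b c (-((k':ℝ)+1)/2) (-((k':ℝ)+1)) (‖x‖^2) with hG2def
  have hcast : (((k' + 1 : ℕ) : ℝ)) = (k' : ℝ) + 1 := by push_cast; ring
  have hQ : ∀ v : EuclideanSpace ℝ (Fin N),
      ∑ i : Fin N, ∑ j : Fin N, v i *
        hessianMatrix (hadamard_Phi ℓ a b c (-((k'+1:ℕ):ℝ)/2) (-((k'+1:ℕ):ℝ))) x i j * v j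
      = 4 * G1 * (∑ m, x m * v m) * v ℓ
        + 4 * x ℓ * G2 * (∑ m, x m * v m)^2
        + 2 * x ℓ * G1 * (∑ m, v m * v m) := by
    intro v
    rw [hcast]
    exact hadamard_quadform_Phi ℓ a b c (-((k':ℝ)+1)/2) (-((k':ℝ)+1)) hx v
  have hQ0 : ∑ i : Fin N, ∑ j : Fin N, v0 i *
        hessianMatrix (hadamard_Phi ℓ a b c (-((k'+1:ℕ):ℝ)/2) (-((k'+1:ℕ):ℝ))) x i j * v0 j
      = 6 * x ℓ * G1 + 4 * x ℓ * (‖x‖^2) * G2 := by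
    rw [hQ v0]
    have hA : ∑ m, x m * v0 m = ‖x‖⁻¹ * ‖x‖^2 := by
      have h1 : ∀ m : Fin N, x m * v0 m = ‖x‖⁻¹ * (x m * x m) := by
        intro m; rw [hv0coord m]; ring
      rw [Finset.sum_congr rfl (fun m _ => h1 m), ← Finset.mul_sum, hxx]
    have hC : ∑ m, v0 m * v0 m = 1 := by
      rw [← hadamard_innersum, hv0v0]
    rw [hA, hC, hv0coord ℓ]
    field_simp
    ring
  have hQf : ∀ m, ∑ i : Fin N, ∑ j : Fin N, f m i *
        hessianMatrix (hadamard_Phi ℓ a b c (-((k'+1:ℕ):ℝ)/2) (-((k'+1:ℕ):ℝ))) x i j * f m j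
      = 2 * x ℓ * G1 := by
    intro m
    rw [hQ (f m)]
    have hA : ∑ m', x m' * f m m' = 0 := by
      rw [← hadamard_innersum]; exact hxS (f m) (hfS m)
    have hC : ∑ m', f m m' * f m m' = 1 := by
      rw [← hadamard_innersum, hff m m]; simp
    rw [hA, hC, hlS (f m) (hfS m)]
    ring
  -- total
  have htot : ∑ i : Fin (k'+1), ∑ a' : Fin N, ∑ d : Fin N, w i a' *
        hessianMatrix (hadamard_Phi ℓ a b c (-((k'+1:ℕ):ℝ)/2) (-((k'+1:ℕ):ℝ))) x a' d * w i d
      = 2 * ((k':ℝ)+1)^2 * c * x ℓ * (‖x‖^2) ^ (-((k':ℝ)+1) - 1) := by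
    rw [Fin.sum_univ_succ]
    simp only [hw, Fin.cons_zero, Fin.cons_succ]
    rw [hQ0]
    rw [Finset.sum_congr rfl (fun (m : Fin k') (_ : m ∈ Finset.univ) => hQf m)]
    rw [Finset.sum_const]
    simp only [Finset.card_univ, Fintype.card_fin, nsmul_eq_mul]
    -- now plug in G1 G2
    rw [hG1def, hG2def, hadamard_barG1_eq, hadamard_barG2_eq]
    set s := ‖x‖^2
    set K := (k' : ℝ) + 1 with hK
    have e1 : s ^ (-K/2 - 1) = s * s ^ (-K/2 - 2) := by
      rw [show -K/2 - 1 = 1 + (-K/2 - 2) from by ring]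
      rw [Real.rpow_add hs, Real.rpow_one]
    have e2 : s ^ (-K - 1) = s * s ^ (-K - 2) := by
      rw [show -K - 1 = 1 + (-K - 2) from by ring]
      rw [Real.rpow_add hs, Real.rpow_one]
    rw [e1, e2]
    ring
  have hherm := hadamard_hessian_isHermitian ℓ a b c (-((k'+1:ℕ):ℝ)/2) (-((k'+1:ℕ):ℝ)) hx
  have hle := hadamard_sum_quadform_le_Pplus (le_of_lt hkN) hk0 hherm w hworth
  rw [htot] at hle
  refine lt_of_lt_of_le ?_ hle
  have hK0 : (0:ℝ) < (k':ℝ) + 1 := by positivity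
  have hr : (0:ℝ) < (‖x‖^2) ^ (-((k':ℝ)+1) - 1) := Real.rpow_pos_of_pos hs _
  exact mul_pos (mul_pos (mul_pos (mul_pos two_pos (pow_pos hK0 2)) hc) hxl) hr

open Filter Metric in
theorem hadamard_cutoff {N : ℕ} (ℓ : Fin N) (a b c p q : ℝ)
    {x₀ : EuclideanSpace ℝ (Fin N)} (hx₀ : x₀ ≠ 0) :
    ∃ ψ : EuclideanSpace ℝ (Fin N) → ℝ, ContDiff ℝ 2 ψ ∧
      ψ x₀ = hadamard_Phi ℓ a b c p q x₀ ∧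
      (∀ᶠ y in nhds x₀, ψ y = hadamard_Phi ℓ a b c p q y) ∧
      hessianMatrix ψ x₀ = hessianMatrix (hadamard_Phi ℓ a b c p q) x₀ := by
  have hnorm : 0 < ‖x₀‖ := norm_pos_iff.mpr hx₀
  set bump : ContDiffBump x₀ :=
    ⟨‖x₀‖/4, ‖x₀‖/2, by positivity, by linarith⟩ with hbump
  set ψ : EuclideanSpace ℝ (Fin N) → ℝ := fun y => bump y * hadamard_Phi ℓ a b c p q y with hψ
  have hval : ψ x₀ = hadamard_Phi ℓ a b c p q x₀ := by
    have h1 : bump x₀ = 1 := bump.one_of_mem_closedBall (by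
      simp [Metric.mem_closedBall, dist_self]; positivity)
    rw [hψ]
    simp only [h1, one_mul]
  have hee : ∀ᶠ y in nhds x₀, ψ y = hadamard_Phi ℓ a b c p q y := by
    refine (bump.eventuallyEq_one).mono (fun y hy => ?_)
    rw [hψ]
    simp only []
    rw [show bump y = 1 from hy, one_mul]
  have hsmooth : ContDiff ℝ 2 ψ := by
    rw [contDiff_iff_contDiffAt]
    intro y
    by_cases hy : dist y x₀ < ‖x₀‖
    · have hyne : y ≠ 0 := by
        intro h
        rw [h] at hy
        rw [dist_comm, dist_zero_right] at hy
        exact lt_irrefl _ hy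
      exact (bump.contDiff.contDiffAt).mul (hadamard_contDiffAt_Phi ℓ a b c p q hyne)
    · push_neg at hy
      have hmem : y ∈ {z : EuclideanSpace ℝ (Fin N) | ‖x₀‖/2 < dist z x₀} := by
        simp only [Set.mem_setOf_eq]
        linarith
      have hopen : IsOpen {z : EuclideanSpace ℝ (Fin N) | ‖x₀‖/2 < dist z x₀} :=
        isOpen_lt continuous_const (continuous_id.dist continuous_const)
      have hout : ∀ᶠ z in nhds y, ψ z = 0 := by
        refine (hopen.eventually_mem hmem).mono (fun z hz => ?_)
        have hzsup : z ∉ Function.support (fun w => bump w) := by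
          rw [bump.support_eq]
          simp only [Metric.mem_ball, not_lt]
          exact le_of_lt hz
        have hz0 : bump z = 0 := Function.notMem_support.mp hzsup
        rw [hψ]
        simp only [hz0, zero_mul]
      exact contDiffAt_const.congr_of_eventuallyEq hout
  refine ⟨ψ, hsmooth, hval, hee, ?_⟩
  funext i j
  show iteratedFDeriv ℝ 2 ψ x₀ ![EuclideanSpace.single i 1, EuclideanSpace.single j 1]
    = iteratedFDeriv ℝ 2 (hadamard_Phi ℓ a b c p q) x₀ _
  have h2 : iteratedFDeriv ℝ 2 ψ x₀ = iteratedFDeriv ℝ 2 (hadamard_Phi ℓ a b c p q) x₀ := by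
    rw [← iteratedFDerivWithin_univ, ← iteratedFDerivWithin_univ]
    apply Filter.EventuallyEq.iteratedFDerivWithin_eq
    · rw [nhdsWithin_univ]
      exact hee
    · exact hval
  rw [h2]

set_option maxHeartbeats 1000000 in
theorem statement17 (N k : ℕ) (hk : 0 < k) (hkN : k < N)
    (u : EuclideanSpace ℝ (Fin N) → ℝ) :
    let lastIdx : Fin N := ⟨N - 1, by omega⟩
    let Ω : Set (EuclideanSpace ℝ (Fin N)) := {x | 0 < x lastIdx}
    ∀ (_ : LowerSemicontinuousOn u (closure Ω)) (_ : ∀ x ∈ closure Ω, 0 ≤ u x)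
      (_ : IsViscositySupersolution (Pplus k) (fun _ => 0) Ω u)
      (μ : ℝ → ℝ)
      (_ : ∀ r : ℝ, μ r = sInf ((fun x => u x / x lastIdx) '' (Ω ∩ Metric.closedBall 0 r))),
      (∀ r₁ r r₂ : ℝ, 0 < r₁ → r₁ < r₂ → r₁ ≤ r → r ≤ r₂ →
        (μ r₁ * (r ^ (-(k : ℝ)) - r₂ ^ (-(k : ℝ)))
          + μ r₂ * (r₁ ^ (-(k : ℝ)) - r ^ (-(k : ℝ))))
          / (r₁ ^ (-(k : ℝ)) - r₂ ^ (-(k : ℝ))) ≤ μ r) ∧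
      (∀ r s : ℝ, 0 < r → r ≤ s → μ r * r ^ (k : ℝ) ≤ μ s * s ^ (k : ℝ)) := by
  intro lastIdx Ω hlsc hpos hsuper μ hμ
  have hN : 0 < N := by omega
  have hΩdef : ∀ y : EuclideanSpace ℝ (Fin N), y ∈ Ω ↔ 0 < y lastIdx := fun _ => Iff.rfl
  set K : ℝ := (k : ℝ) with hK
  have hK0 : (0:ℝ) < K := by rw [hK]; exact_mod_cast hk
  have hKneg : -K < 0 := by linarith
  have hcont_coord : Continuous (fun y : EuclideanSpace ℝ (Fin N) => y lastIdx) :=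
    (EuclideanSpace.proj (𝕜 := ℝ) lastIdx).continuous
  have hclosure : ∀ x : EuclideanSpace ℝ (Fin N), 0 ≤ x lastIdx → x ∈ closure Ω := by
    intro x hx
    have htend : Filter.Tendsto (fun t : ℝ => x + t • EuclideanSpace.single lastIdx (1:ℝ))
        (nhdsWithin 0 (Set.Ioi 0)) (nhds x) := by
      have hcontf : Continuous (fun t : ℝ => x + t • EuclideanSpace.single lastIdx (1:ℝ)) :=
        continuous_const.add (continuous_id.smul continuous_const)
      have h0 := hcontf.tendsto 0
      simp only [zero_smul, add_zero] at h0
      exact h0.mono_left nhdsWithin_le_nhds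
    refine mem_closure_of_tendsto htend ?_
    filter_upwards [self_mem_nhdsWithin] with t ht
    rw [hΩdef]
    have : (x + t • EuclideanSpace.single lastIdx (1:ℝ)) lastIdx = x lastIdx + t := by
      simp [EuclideanSpace.single_apply]
    rw [this]
    have ht' : 0 < t := ht
    linarith
  have hne : ∀ r : ℝ, 0 < r →
      ((fun x => u x / x lastIdx) '' (Ω ∩ Metric.closedBall 0 r)).Nonempty := by
    intro r hr
    refine ⟨u (EuclideanSpace.single lastIdx (r/2)) / (EuclideanSpace.single lastIdx (r/2)) lastIdx,
      ⟨EuclideanSpace.single lastIdx (r/2), ⟨?_, ?_⟩, rfl⟩⟩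
    · rw [hΩdef]
      simp [EuclideanSpace.single_apply]
      linarith
    · rw [mem_closedBall_zero_iff, EuclideanSpace.norm_single]
      rw [Real.norm_eq_abs, abs_of_pos (by linarith)]
      linarith
  have hbdd : ∀ r : ℝ, BddBelow ((fun x => u x / x lastIdx) '' (Ω ∩ Metric.closedBall 0 r)) := by
    intro r
    refine ⟨0, ?_⟩
    rintro t ⟨y, ⟨hyΩ, _⟩, rfl⟩
    exact div_nonneg (hpos y (subset_closure hyΩ)) (le_of_lt ((hΩdef y).mp hyΩ))
  have hμ_le : ∀ (r : ℝ) (x : EuclideanSpace ℝ (Fin N)), x ∈ Ω → ‖x‖ ≤ r →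
      μ r ≤ u x / x lastIdx := by
    intro r x hx hxr
    rw [hμ r]
    exact csInf_le (hbdd r) ⟨x, ⟨hx, mem_closedBall_zero_iff.mpr hxr⟩, rfl⟩
  have hμmul : ∀ (r : ℝ) (x : EuclideanSpace ℝ (Fin N)), x ∈ Ω → ‖x‖ ≤ r →
      μ r * x lastIdx ≤ u x := by
    intro r x hx hxr
    have h1 := hμ_le r x hx hxr
    have h2 : 0 < x lastIdx := (hΩdef x).mp hx
    rw [le_div_iff₀ h2] at h1
    exact h1
  have hμ0 : ∀ r : ℝ, 0 < r → 0 ≤ μ r := by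
    intro r hr
    rw [hμ r]
    apply le_csInf (hne r hr)
    rintro t ⟨y, ⟨hyΩ, _⟩, rfl⟩
    exact div_nonneg (hpos y (subset_closure hyΩ)) (le_of_lt ((hΩdef y).mp hyΩ))
  have hμanti : ∀ r r' : ℝ, 0 < r → r ≤ r' → μ r' ≤ μ r := by
    intro r r' hr hrr
    rw [hμ r, hμ r']
    apply csInf_le_csInf (hbdd r') (hne r hr)
    apply Set.image_mono
    exact Set.inter_subset_inter_right _ (Metric.closedBall_subset_closedBall hrr)
  have hpow_anti : ∀ t t' : ℝ, 0 < t → t ≤ t' → ∀ z : ℝ, z < 0 → t' ^ z ≤ t ^ z := by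
    intro t t' ht htt z hz
    rcases eq_or_lt_of_le htt with rfl | hlt
    · exact le_refl _
    · exact le_of_lt (Real.rpow_lt_rpow_of_neg ht hlt hz)
  have hsq : ∀ t : ℝ, 0 ≤ t → ((t^2 : ℝ)) ^ (-K/2) = t ^ (-K) := by
    intro t ht
    rw [← Real.rpow_natCast t 2, ← Real.rpow_mul ht]
    have h2 : ((2:ℕ):ℝ) * (-K/2) = -K := by push_cast; ring
    rw [h2]
  -- main comparison lemma
  have hcomp : ∀ r₁ r₂ : ℝ, 0 < r₁ → r₁ < r₂ → ∀ A B : ℝ, 0 ≤ B →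
      A + B * r₁ ^ (-K) ≤ μ r₁ → A + B * r₂ ^ (-K) ≤ μ r₂ →
      ∀ x : EuclideanSpace ℝ (Fin N), x ∈ Ω → r₁ ≤ ‖x‖ → ‖x‖ ≤ r₂ →
      x lastIdx * (A + B * ‖x‖ ^ (-K)) ≤ u x := by
    intro r₁ r₂ hr₁ hr₁₂ A B hB hA1 hA2 x hxΩ hx1 hx2
    have hxl : 0 < x lastIdx := (hΩdef x).mp hxΩ
    have hr₂0 : 0 < r₂ := lt_trans hr₁ hr₁₂
    have hεclaim : ∀ ε : ℝ, 0 < ε →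
        x lastIdx * ((A - ε - ε * (r₁^2) ^ (-K)) + B * (‖x‖^2) ^ (-K/2)
          + ε * (‖x‖^2) ^ (-K)) ≤ u x := by
      intro ε hε
      set a0 : ℝ := A - ε - ε * (r₁^2) ^ (-K) with ha0
      set φ : EuclideanSpace ℝ (Fin N) → ℝ := hadamard_Phi lastIdx a0 B ε (-K/2) (-K) with hφ
      have hφval : ∀ y : EuclideanSpace ℝ (Fin N),
          φ y = y lastIdx * (a0 + B * (‖y‖^2) ^ (-K/2) + ε * (‖y‖^2) ^ (-K)) := fun y => rfl
      set Kset : Set (EuclideanSpace ℝ (Fin N)) :=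
        {y | (r₁ ≤ ‖y‖ ∧ ‖y‖ ≤ r₂) ∧ 0 ≤ y lastIdx} with hKsetdef
      have hKmem : ∀ y : EuclideanSpace ℝ (Fin N),
          y ∈ Kset ↔ (r₁ ≤ ‖y‖ ∧ ‖y‖ ≤ r₂) ∧ 0 ≤ y lastIdx := fun _ => Iff.rfl
      have hKne0 : ∀ y ∈ Kset, y ≠ (0:EuclideanSpace ℝ (Fin N)) := by
        intro y hy h0
        have h1 := ((hKmem y).mp hy).1.1
        rw [h0, norm_zero] at h1
        linarith
      have hKclosed : IsClosed Kset := by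
        have hKeq : Kset = ({y : EuclideanSpace ℝ (Fin N) | r₁ ≤ ‖y‖} ∩ {y | ‖y‖ ≤ r₂})
            ∩ {y | 0 ≤ y lastIdx} := by
          ext y
          rw [hKmem y]
          simp only [Set.mem_inter_iff, Set.mem_setOf_eq]
        rw [hKeq]
        exact ((isClosed_le continuous_const continuous_norm).inter
          (isClosed_le continuous_norm continuous_const)).inter
          (isClosed_le continuous_const hcont_coord)
      have hKsub : Kset ⊆ Metric.closedBall 0 r₂ := by
        intro y hy
        exact mem_closedBall_zero_iff.mpr ((hKmem y).mp hy).1.2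
      have hKcpt : IsCompact Kset :=
        (isCompact_closedBall (0:EuclideanSpace ℝ (Fin N)) r₂).of_isClosed_subset hKclosed hKsub
      have hxK : x ∈ Kset := (hKmem x).mpr ⟨⟨hx1, hx2⟩, hxl.le⟩
      have hKsubcl : Kset ⊆ closure Ω := fun y hy => hclosure y ((hKmem y).mp hy).2
      have hlscK : LowerSemicontinuousOn (fun y => u y - φ y) Kset := by
        intro y hy
        have h1 : LowerSemicontinuousWithinAt u Kset y := (hlsc.mono hKsubcl) y hy
        have hφc : ContinuousWithinAt (fun z => -(φ z)) Kset y := by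
          have h3 := (hadamard_contDiffAt_Phi lastIdx a0 B ε (-K/2) (-K)
            (hKne0 y hy)).continuousAt
          exact (h3.neg).continuousWithinAt
        have h2 := h1.add hφc.lowerSemicontinuousWithinAt
        simp only [sub_eq_add_neg]
        exact h2
      obtain ⟨x₀, hx₀K, hx₀min⟩ := hadamard_lsc_exists_min hKcpt ⟨x, hxK⟩ hlscK
      have hmain : 0 ≤ u x₀ - φ x₀ := by
        obtain ⟨⟨hk1, hk2⟩, hk3⟩ := (hKmem x₀).mp hx₀K
        rcases eq_or_lt_of_le hk3 with h0 | h0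
        · rw [hφval x₀, ← h0]
          simp only [zero_mul, sub_zero]
          exact hpos x₀ (hKsubcl hx₀K)
        · have hx₀Ω : x₀ ∈ Ω := (hΩdef x₀).mpr h0
          rcases eq_or_lt_of_le hk1 with h1 | h1
          · have hu := hμmul r₁ x₀ hx₀Ω (le_of_eq h1.symm)
            have hφx : φ x₀ = x₀ lastIdx * (A - ε + B * r₁ ^ (-K)) := by
              rw [hφval x₀, ← h1, ha0, hsq r₁ hr₁.le]
              ring
            have h3 : A - ε + B * r₁ ^ (-K) ≤ μ r₁ - ε := by linarith
            have h4 := mul_le_mul_of_nonneg_left h3 h0.le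
            rw [hφx]
            nlinarith [mul_pos h0 hε]
          · rcases eq_or_lt_of_le hk2 with h2 | h2
            · have hu := hμmul r₂ x₀ hx₀Ω h2.le
              have hneg2 : (r₂^2 : ℝ) ^ (-K) ≤ (r₁^2) ^ (-K) := by
                apply hpow_anti (r₁^2) (r₂^2) (by positivity) ?_ (-K) hKneg
                nlinarith
              have hφx : φ x₀ = x₀ lastIdx * (A - ε + B * r₂ ^ (-K)
                  + ε * ((r₂^2) ^ (-K) - (r₁^2) ^ (-K))) := by
                rw [hφval x₀, h2, ha0, hsq r₂ hr₂0.le]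
                ring
              have h3 : A - ε + B * r₂ ^ (-K) + ε * ((r₂^2) ^ (-K) - (r₁^2) ^ (-K))
                  ≤ μ r₂ - ε := by nlinarith
              have h4 := mul_le_mul_of_nonneg_left h3 h0.le
              rw [hφx]
              nlinarith [mul_pos h0 hε]
            · exfalso
              have hx₀0 : x₀ ≠ (0:EuclideanSpace ℝ (Fin N)) := hKne0 x₀ hx₀K
              obtain ⟨ψ, hψC, hψval, hψee, hψhess⟩ :=
                hadamard_cutoff lastIdx a0 B ε (-K/2) (-K) hx₀0
              have hlm : IsLocalMinOn (fun y => u y - ψ y) Ω x₀ := by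
                have hUopen : IsOpen {y : EuclideanSpace ℝ (Fin N) | r₁ < ‖y‖ ∧ ‖y‖ < r₂} :=
                  (isOpen_lt continuous_const continuous_norm).inter
                    (isOpen_lt continuous_norm continuous_const)
                have hU : {y : EuclideanSpace ℝ (Fin N) | r₁ < ‖y‖ ∧ ‖y‖ < r₂} ∈ nhds x₀ :=
                  hUopen.mem_nhds ⟨h1, h2⟩
                have hUΩ : {y : EuclideanSpace ℝ (Fin N) | r₁ < ‖y‖ ∧ ‖y‖ < r₂}
                    ∈ nhdsWithin x₀ Ω := mem_nhdsWithin_of_mem_nhds hU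
                have hψΩ : ∀ᶠ y in nhdsWithin x₀ Ω, ψ y = φ y :=
                  hψee.filter_mono nhdsWithin_le_nhds
                show ∀ᶠ y in nhdsWithin x₀ Ω, u x₀ - ψ x₀ ≤ u y - ψ y
                filter_upwards [hUΩ, hψΩ, self_mem_nhdsWithin] with y hyU hyψ hyΩ
                rw [hψval, hyψ]
                have hyK : y ∈ Kset := (hKmem y).mpr ⟨⟨hyU.1.le, hyU.2.le⟩,
                  (le_of_lt ((hΩdef y).mp hyΩ))⟩
                exact hx₀min y hyK
              have hvis := hsuper x₀ hx₀Ω ψ hψC hlm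
              rw [hψhess] at hvis
              have hvis' : Pplus k (hessianMatrix
                  (hadamard_Phi lastIdx a0 B ε (-K/2) (-K)) x₀) ≤ 0 := by
                simpa using hvis
              have hpos' := hadamard_pplus_pos hk hkN lastIdx a0 B ε hε h0
              rw [← hK] at hpos'
              linarith [hpos', hvis']
      have hxmin := hx₀min x hxK
      rw [← hφval x]
      linarith
    set T := x lastIdx * (A + B * ‖x‖ ^ (-K)) with hT
    set C := x lastIdx * ((‖x‖^2) ^ (-K) - 1 - (r₁^2) ^ (-K)) with hC
    have hTC : ∀ ε : ℝ, 0 < ε → T + ε * C ≤ u x := by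
      intro ε hε
      have h := hεclaim ε hε
      have heq : x lastIdx * ((A - ε - ε * (r₁^2) ^ (-K)) + B * (‖x‖^2) ^ (-K/2)
          + ε * (‖x‖^2) ^ (-K)) = T + ε * C := by
        rw [hT, hC, hsq ‖x‖ (norm_nonneg x)]
        ring
      rw [heq] at h
      exact h
    rcases le_or_gt 0 C with hC0 | hC0
    · have h1 := hTC 1 one_pos
      nlinarith
    · by_contra hcon
      push_neg at hcon
      have hεp : 0 < (T - u x) / (-2*C) := div_pos (by linarith) (by linarith)
      have h := hTC _ hεp
      have hCne : C ≠ 0 := ne_of_lt hC0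
      have he : (T - u x)/(-2*C) * C = -(T - u x)/2 := by
        field_simp
      linarith
  have hpart1 : ∀ r₁ r r₂ : ℝ, 0 < r₁ → r₁ < r₂ → r₁ ≤ r → r ≤ r₂ →
      (μ r₁ * (r ^ (-K) - r₂ ^ (-K)) + μ r₂ * (r₁ ^ (-K) - r ^ (-K)))
        / (r₁ ^ (-K) - r₂ ^ (-K)) ≤ μ r := by
    intro r₁ r r₂ h1 h12 hr1 hr2
    have hr0 : 0 < r := lt_of_lt_of_le h1 hr1
    have hr₂0 : 0 < r₂ := lt_trans h1 h12
    have hD : 0 < r₁ ^ (-K) - r₂ ^ (-K) :=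
      sub_pos.mpr (Real.rpow_lt_rpow_of_neg h1 h12 hKneg)
    set B := (μ r₁ - μ r₂) / (r₁ ^ (-K) - r₂ ^ (-K)) with hB
    set A := μ r₁ - B * r₁ ^ (-K) with hA
    have hBnn : 0 ≤ B := div_nonneg (sub_nonneg.mpr (hμanti r₁ r₂ h1 h12.le)) hD.le
    have hA1 : A + B * r₁ ^ (-K) = μ r₁ := by rw [hA]; ring
    have hA2 : A + B * r₂ ^ (-K) = μ r₂ := by
      rw [hA, hB]
      field_simp
      ring
    have hgoal2 : A + B * r ^ (-K) ≤ μ r := by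
      rw [hμ r]
      apply le_csInf (hne r hr0)
      rintro t ⟨y, ⟨hyΩ, hyball⟩, rfl⟩
      have hyl : 0 < y lastIdx := (hΩdef y).mp hyΩ
      have hynorm : ‖y‖ ≤ r := mem_closedBall_zero_iff.mp hyball
      rcases le_or_gt ‖y‖ r₁ with hy1 | hy1
      · have h3 : μ r₁ ≤ u y / y lastIdx := hμ_le r₁ y hyΩ hy1
        have h4 : B * r ^ (-K) ≤ B * r₁ ^ (-K) :=
          mul_le_mul_of_nonneg_left (hpow_anti r₁ r h1 hr1 _ hKneg) hBnn
        linarith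
      · have h5 := hcomp r₁ r₂ h1 h12 A B hBnn hA1.le hA2.le y hyΩ hy1.le
          (le_trans hynorm hr2)
        have h6 : A + B * r ^ (-K) ≤ A + B * ‖y‖ ^ (-K) := by
          have h7 := hpow_anti ‖y‖ r (lt_trans h1 hy1) hynorm (-K) hKneg
          nlinarith
        rw [le_div_iff₀ hyl]
        calc (A + B * r ^ (-K)) * y lastIdx ≤ (A + B * ‖y‖ ^ (-K)) * y lastIdx :=
              mul_le_mul_of_nonneg_right h6 hyl.le
          _ ≤ u y := by rw [mul_comm]; exact h5
    have heq : (μ r₁ * (r ^ (-K) - r₂ ^ (-K)) + μ r₂ * (r₁ ^ (-K) - r ^ (-K)))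
        / (r₁ ^ (-K) - r₂ ^ (-K)) = A + B * r ^ (-K) := by
      rw [← hA1, ← hA2]
      field_simp
      ring
    rw [heq]
    exact hgoal2
  constructor
  · exact hpart1
  · intro r s hr hrs
    rcases eq_or_lt_of_le hrs with rfl | hrs'
    · exact le_refl _
    · have hs0 : 0 < s := lt_trans hr hrs'
      have hlim0 : Filter.Tendsto (fun R : ℝ => R ^ (-K)) Filter.atTop (nhds 0) :=
        tendsto_rpow_neg_atTop hK0
      have hrK : r ^ (-K) ≠ 0 := ne_of_gt (Real.rpow_pos_of_pos hr _)
      have hlim : Filter.Tendsto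
          (fun R : ℝ => μ r * (s ^ (-K) - R ^ (-K)) / (r ^ (-K) - R ^ (-K)))
          Filter.atTop (nhds (μ r * (s ^ (-K) - 0) / (r ^ (-K) - 0))) := by
        apply Filter.Tendsto.div
        · exact tendsto_const_nhds.mul (tendsto_const_nhds.sub hlim0)
        · exact tendsto_const_nhds.sub hlim0
        · rw [sub_zero]; exact hrK
      have hev : ∀ᶠ R in Filter.atTop,
          μ r * (s ^ (-K) - R ^ (-K)) / (r ^ (-K) - R ^ (-K)) ≤ μ s := by
        filter_upwards [Filter.eventually_gt_atTop s] with R hR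
        have hp1 := hpart1 r s R hr (lt_trans hrs' hR) hrs hR.le
        have hDpos : 0 < r ^ (-K) - R ^ (-K) :=
          sub_pos.mpr (Real.rpow_lt_rpow_of_neg hr (lt_trans hrs' hR) hKneg)
        have hterm : 0 ≤ μ R * (r ^ (-K) - s ^ (-K)) :=
          mul_nonneg (hμ0 R (lt_trans hs0 hR)) (sub_nonneg.mpr (hpow_anti r s hr hrs (-K) hKneg))
        calc μ r * (s ^ (-K) - R ^ (-K)) / (r ^ (-K) - R ^ (-K))
            ≤ (μ r * (s ^ (-K) - R ^ (-K)) + μ R * (r ^ (-K) - s ^ (-K)))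
                / (r ^ (-K) - R ^ (-K)) := by
              apply div_le_div_of_nonneg_right (by linarith) hDpos.le
          _ ≤ μ s := hp1
      have hfin := le_of_tendsto hlim hev
      have hsK : (0:ℝ) < s ^ K := Real.rpow_pos_of_pos hs0 K
      have hrKpos : (0:ℝ) < r ^ K := Real.rpow_pos_of_pos hr K
      have e1 : μ r * (s ^ (-K) - 0) / (r ^ (-K) - 0) = μ r * r ^ K / s ^ K := by
        rw [sub_zero, sub_zero, Real.rpow_neg hr.le, Real.rpow_neg hs0.le]
        field_simp
      rw [e1, div_le_iff₀ hsK] at hfin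
      exact hfin
end

section
/- Let N ≥ 2, let f ∈ C²((0, +∞)), and let φ(x) = x_N·f(|x|) for x ∈ ℝ^N_+. Fix x ∈ ℝ^N_+ and set b = x_N·(f″(|x|) − f′(|x|)/|x|), c = f′(|x|), d = x_N·f′(|x|)/|x|, and s = x_N/|x|. Then the eigenvalues of the Hessian D²φ(x), listed in nondecreasing order with multiplicity, are: λ₁(D²φ(x)) = d + (b + 2cs − √((b + 2cs)² + 4c²(1 − s²)))/2, λ₂(D²φ(x)) = ⋯ = λ_{N−1}(D²φ(x)) = d, and λ_N(D²φ(x)) = d + (b + 2cs + √((b + 2cs)² + 4c²(1 − s²)))/2. Moreover d is an eigenvalue whose eigenspace contains the orthogonal complement of span{e_N, x}. -/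
open scoped BigOperators

set_option maxHeartbeats 1000000 in
lemma monotone_eq_of_multiset_map_eq {n : ℕ} {g h : Fin n → ℝ}
    (hg : Monotone g) (hh : Monotone h)
    (hm : Finset.univ.val.map g = Finset.univ.val.map h) : g = h := by
  have hu : (Finset.univ : Finset (Fin n)).val = ↑(List.finRange n) := by
    rw [Fin.univ_def]
  rw [hu] at hm
  have : (↑((List.finRange n).map g) : Multiset ℝ) = ↑((List.finRange n).map h) := by
    simpa using hm
  have hperm : ((List.finRange n).map g).Perm ((List.finRange n).map h) :=
    Multiset.coe_eq_coe.mp this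
  rw [← List.ofFn_eq_map, ← List.ofFn_eq_map] at hperm
  exact List.ofFn_injective
    (hperm.eq_of_sortedLE hg.sortedLE_ofFn hh.sortedLE_ofFn)

lemma multiset_map_perm_comp {n : ℕ} (g : Fin n → ℝ) (σ : Equiv.Perm (Fin n)) :
    Finset.univ.val.map (g ∘ σ) = Finset.univ.val.map g := by
  rw [← Multiset.map_map]
  congr 1
  have : Finset.univ.val.map (σ : Fin n → Fin n) =
      (Finset.univ.map σ.toEmbedding).val := rfl
  rw [this, Finset.map_univ_equiv]

lemma multiset_eq_of_prod_X_sub_C {n : ℕ} (g h : Fin n → ℝ)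
    (hp : (∏ i, (Polynomial.X - Polynomial.C (g i))) = ∏ i, (Polynomial.X - Polynomial.C (h i))) :
    Finset.univ.val.map g = Finset.univ.val.map h := by
  have e1 : (∏ i, (Polynomial.X - Polynomial.C (g i))) =
      ((Finset.univ.val.map g).map fun a => Polynomial.X - Polynomial.C a).prod := by
    rw [Finset.prod_eq_multiset_prod, Multiset.map_map]; rfl
  have e2 : (∏ i, (Polynomial.X - Polynomial.C (h i))) =
      ((Finset.univ.val.map h).map fun a => Polynomial.X - Polynomial.C a).prod := by
    rw [Finset.prod_eq_multiset_prod, Multiset.map_map]; rfl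
  have := congrArg Polynomial.roots (e1 ▸ e2 ▸ hp)
  rwa [Polynomial.roots_multiset_prod_X_sub_C, Polynomial.roots_multiset_prod_X_sub_C] at this

open Matrix in
lemma det_smul_one_sub_eq_prod {n : ℕ} {A : Matrix (Fin n) (Fin n) ℝ}
    (hA : A.IsHermitian) (y : ℝ) :
    (y • (1 : Matrix (Fin n) (Fin n) ℝ) - A).det = ∏ i, (y - hA.eigenvalues i) := by
  have hU : (hA.eigenvectorUnitary : Matrix (Fin n) (Fin n) ℝ) *
      star (hA.eigenvectorUnitary : Matrix (Fin n) (Fin n) ℝ) = 1 :=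
    (Matrix.mem_unitaryGroup_iff).mp hA.eigenvectorUnitary.2
  have hspec := hA.spectral_theorem
  rw [Unitary.conjStarAlgAut_apply] at hspec
  have key : y • (1 : Matrix (Fin n) (Fin n) ℝ) - A =
      (hA.eigenvectorUnitary : Matrix (Fin n) (Fin n) ℝ) *
        (y • 1 - diagonal (RCLike.ofReal ∘ hA.eigenvalues)) *
        star (hA.eigenvectorUnitary : Matrix (Fin n) (Fin n) ℝ) := by
    rw [Matrix.mul_sub, Matrix.sub_mul, ← hspec]
    congr 1
    rw [Matrix.mul_smul, Matrix.mul_one, Matrix.smul_mul, hU]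
  have hU2 : star (hA.eigenvectorUnitary : Matrix (Fin n) (Fin n) ℝ) *
      (hA.eigenvectorUnitary : Matrix (Fin n) (Fin n) ℝ) = 1 :=
    (Matrix.mem_unitaryGroup_iff').mp hA.eigenvectorUnitary.2
  rw [key, Matrix.det_mul, Matrix.det_mul, mul_comm, ← mul_assoc, ← Matrix.det_mul, hU2,
    Matrix.det_one, one_mul]
  rw [Matrix.smul_one_eq_diagonal, Matrix.diagonal_sub, Matrix.det_diagonal]
  rfl

lemma hasFDerivAt_norm_euc {N : ℕ} (x : EuclideanSpace ℝ (Fin N)) (hx : x ≠ 0) :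
    HasFDerivAt (fun z : EuclideanSpace ℝ (Fin N) => ‖z‖) (‖x‖⁻¹ • innerSL ℝ x) x := by
  have h1 : HasFDerivAt (fun z : EuclideanSpace ℝ (Fin N) => ‖z‖^2) (2 • (innerSL ℝ x)) x :=
    (hasStrictFDerivAt_norm_sq x).hasFDerivAt
  have h2 : HasDerivAt Real.sqrt (1 / (2 * Real.sqrt (‖x‖^2))) (‖x‖^2) :=
    Real.hasDerivAt_sqrt (pow_ne_zero 2 (norm_ne_zero_iff.2 hx))
  have h3 := h2.comp_hasFDerivAt x h1
  have he : (fun z : EuclideanSpace ℝ (Fin N) => Real.sqrt (‖z‖^2)) = fun z => ‖z‖ := by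
    funext z; rw [Real.sqrt_sq (norm_nonneg z)]
  rw [Function.comp_def, he] at h3
  refine h3.congr_fderiv ?_
  rw [Real.sqrt_sq (norm_nonneg x)]
  ext v
  simp [smul_smul]
  ring

lemma phi_hasFDerivAt {N : ℕ} (f f' : ℝ → ℝ)
    (hf' : ∀ r : ℝ, 0 < r → HasDerivAt f (f' r) r) (n : Fin N)
    (y : EuclideanSpace ℝ (Fin N)) (hy : y ≠ 0) :
    HasFDerivAt (fun z : EuclideanSpace ℝ (Fin N) => z n * f ‖z‖)
      (f ‖y‖ • (EuclideanSpace.proj n : EuclideanSpace ℝ (Fin N) →L[ℝ] ℝ)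
        + (y n * f' ‖y‖ * ‖y‖⁻¹) • innerSL ℝ y) y := by
  have hr : (0:ℝ) < ‖y‖ := norm_pos_iff.2 hy
  have hnorm := hasFDerivAt_norm_euc y hy
  have hfn : HasFDerivAt (fun z : EuclideanSpace ℝ (Fin N) => f ‖z‖)
      (f' ‖y‖ • (‖y‖⁻¹ • innerSL ℝ y)) y := (hf' ‖y‖ hr).comp_hasFDerivAt y hnorm
  have hproj : HasFDerivAt (fun z : EuclideanSpace ℝ (Fin N) => z n)
      (EuclideanSpace.proj n : EuclideanSpace ℝ (Fin N) →L[ℝ] ℝ) y :=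
    (EuclideanSpace.proj n : EuclideanSpace ℝ (Fin N) →L[ℝ] ℝ).hasFDerivAt
  have := hproj.mul hfn
  refine this.congr_fderiv ?_
  ext v
  simp [smul_smul]
  ring

set_option maxHeartbeats 1000000 in
lemma hess_entry {N : ℕ} (f f' f'' : ℝ → ℝ) (n : Fin N)
    (hf' : ∀ r : ℝ, 0 < r → HasDerivAt f (f' r) r)
    (hf'' : ∀ r : ℝ, 0 < r → HasDerivAt f' (f'' r) r)
    (x : EuclideanSpace ℝ (Fin N)) (hx : x ≠ 0) (i j : Fin N) :
    iteratedFDeriv ℝ 2 (fun y : EuclideanSpace ℝ (Fin N) => y n * f ‖y‖) x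
        ![EuclideanSpace.single i 1, EuclideanSpace.single j 1]
      = (x n * f' ‖x‖ / ‖x‖) * (if i = j then 1 else 0)
        + (x n * (f'' ‖x‖ - f' ‖x‖ / ‖x‖) / ‖x‖^2) * (x i * x j)
        + (f' ‖x‖ / ‖x‖) * ((if i = n then 1 else 0) * x j + (if j = n then 1 else 0) * x i) := by
  have hr : (0:ℝ) < ‖x‖ := norm_pos_iff.2 hx
  set g : EuclideanSpace ℝ (Fin N) → (EuclideanSpace ℝ (Fin N) →L[ℝ] ℝ) := fun y =>
    f ‖y‖ • (EuclideanSpace.proj n : EuclideanSpace ℝ (Fin N) →L[ℝ] ℝ)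
      + (y n * f' ‖y‖ * ‖y‖⁻¹) • innerSL ℝ y with hg
  have hev : fderiv ℝ (fun y : EuclideanSpace ℝ (Fin N) => y n * f ‖y‖) =ᶠ[nhds x] g := by
    filter_upwards [eventually_ne_nhds hx] with y hy
    exact (phi_hasFDerivAt f f' hf' n y hy).fderiv
  have hnorm := hasFDerivAt_norm_euc x hx
  have hfn : HasFDerivAt (fun z : EuclideanSpace ℝ (Fin N) => f ‖z‖)
      (f' ‖x‖ • (‖x‖⁻¹ • innerSL ℝ x)) x := (hf' ‖x‖ hr).comp_hasFDerivAt x hnorm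
  have hf'n : HasFDerivAt (fun z : EuclideanSpace ℝ (Fin N) => f' ‖z‖)
      (f'' ‖x‖ • (‖x‖⁻¹ • innerSL ℝ x)) x := (hf'' ‖x‖ hr).comp_hasFDerivAt x hnorm
  have hproj : HasFDerivAt (fun z : EuclideanSpace ℝ (Fin N) => z n)
      (EuclideanSpace.proj n : EuclideanSpace ℝ (Fin N) →L[ℝ] ℝ) x :=
    (EuclideanSpace.proj n : EuclideanSpace ℝ (Fin N) →L[ℝ] ℝ).hasFDerivAt
  have h1 := hfn.smul (hasFDerivAt_const
    (EuclideanSpace.proj n : EuclideanSpace ℝ (Fin N) →L[ℝ] ℝ) x)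
  have hinv : HasFDerivAt (fun z : EuclideanSpace ℝ (Fin N) => (‖z‖)⁻¹)
      ((-(‖x‖^2)⁻¹) • (‖x‖⁻¹ • innerSL ℝ x)) x :=
    (hasDerivAt_inv hr.ne').comp_hasFDerivAt x hnorm
  have hk := (hproj.mul hf'n).mul hinv
  have h2 := hk.smul ((innerSL ℝ : EuclideanSpace ℝ (Fin N) →L[ℝ]
      (EuclideanSpace ℝ (Fin N) →L[ℝ] ℝ)).hasFDerivAt)
  have hG := h1.add h2
  have hfd : fderiv ℝ (fderiv ℝ (fun y : EuclideanSpace ℝ (Fin N) => y n * f ‖y‖)) x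
      = fderiv ℝ g x := hev.fderiv_eq
  rw [iteratedFDeriv_two_apply, hfd, (show HasFDerivAt g _ x from hG).fderiv]
  show _ = _
  simp only [ContinuousLinearMap.add_apply, ContinuousLinearMap.smul_apply,
    ContinuousLinearMap.smulRight_apply, ContinuousLinearMap.coe_smul', Pi.smul_apply,
    innerSL_apply_apply, Pi.mul_apply, PiLp.proj_apply,
    EuclideanSpace.single_apply, smul_eq_mul, Matrix.cons_val_zero, Matrix.cons_val_one,
    Matrix.head_cons, ContinuousLinearMap.zero_apply,
    EuclideanSpace.inner_single_right, EuclideanSpace.inner_single_left,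
    ContinuousLinearMap.sub_apply, map_zero, conj_trivial,
    real_inner_smul_left, mul_zero, zero_mul, add_zero, zero_add, smul_zero]
  rw [innerSL_apply_apply, EuclideanSpace.inner_single_right, innerSL_apply_apply,
    EuclideanSpace.inner_single_right]
  simp only [EuclideanSpace.single_apply]
  simp only [conj_trivial]
  have hne : ‖x‖ ≠ 0 := hr.ne'
  clear hG h2 h1 hk hinv hev hfd hfn hf'n hproj hnorm hg hf' hf''
  clear_value g
  clear g
  field_simp
  split_ifs <;> subst_vars <;> first | ring1 | simp_all

set_option maxHeartbeats 2000000 in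
theorem statement19 (N : ℕ) (hN : 2 ≤ N)
    (f f' f'' : ℝ → ℝ)
    (hf' : ∀ r : ℝ, 0 < r → HasDerivAt f (f' r) r)
    (hf'' : ∀ r : ℝ, 0 < r → HasDerivAt f' (f'' r) r)
    (hf''cont : ContinuousOn f'' (Set.Ioi 0))
    (x : EuclideanSpace ℝ (Fin N))
    (hx : 0 < x ⟨N - 1, by omega⟩) :
    let lastIdx : Fin N := ⟨N - 1, by omega⟩
    let φ : EuclideanSpace ℝ (Fin N) → ℝ := fun y => y lastIdx * f ‖y‖
    let b : ℝ := x lastIdx * (f'' ‖x‖ - f' ‖x‖ / ‖x‖)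
    let c : ℝ := f' ‖x‖
    let d : ℝ := x lastIdx * f' ‖x‖ / ‖x‖
    let s : ℝ := x lastIdx / ‖x‖
    let A : Matrix (Fin N) (Fin N) ℝ := hessianMatrix φ x
    sortedEig A ⟨0, by omega⟩
        = d + (b + 2 * c * s
            - Real.sqrt ((b + 2 * c * s) ^ 2 + 4 * c ^ 2 * (1 - s ^ 2))) / 2 ∧
    (∀ i : Fin N, 0 < (i : ℕ) → (i : ℕ) < N - 1 → sortedEig A i = d) ∧
    sortedEig A ⟨N - 1, by omega⟩
        = d + (b + 2 * c * s
            + Real.sqrt ((b + 2 * c * s) ^ 2 + 4 * c ^ 2 * (1 - s ^ 2))) / 2 ∧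
    (∀ v : EuclideanSpace ℝ (Fin N),
      (inner ℝ v x : ℝ) = 0 → v lastIdx = 0 →
        A.mulVec (fun i => v i) = fun i => d * v i) := by
  intro lastIdx φ b c d s A
  have hxne : x ≠ 0 := by
    intro h
    rw [h] at hx
    simp at hx
  have hr : (0:ℝ) < ‖x‖ := norm_pos_iff.2 hxne
  have hrne : ‖x‖ ≠ 0 := hr.ne'
  have hb : b = x lastIdx * (f'' ‖x‖ - f' ‖x‖ / ‖x‖) := rfl
  have hc : c = f' ‖x‖ := rfl
  have hd : d = x lastIdx * f' ‖x‖ / ‖x‖ := rfl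
  have hs : s = x lastIdx / ‖x‖ := rfl
  have hsr : x lastIdx = s * ‖x‖ := by rw [hs]; field_simp
  -- explicit entries
  have hAM : ∀ i j, A i j
      = d * (if i = j then 1 else 0) + (b / ‖x‖^2) * (x i * x j)
        + (c / ‖x‖) * ((if i = lastIdx then 1 else 0) * x j
            + (if j = lastIdx then 1 else 0) * x i) := by
    intro i j
    have h : A i j
        = (x lastIdx * f' ‖x‖ / ‖x‖) * (if i = j then 1 else 0)
          + (x lastIdx * (f'' ‖x‖ - f' ‖x‖ / ‖x‖) / ‖x‖^2) * (x i * x j)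
          + (f' ‖x‖ / ‖x‖) * ((if i = lastIdx then 1 else 0) * x j
              + (if j = lastIdx then 1 else 0) * x i) :=
      hess_entry f f' f'' lastIdx hf' hf'' x hxne i j
    rw [h, hb, hc, hd]
  set T := b + 2 * c * s with hT
  set t2 := 1 - s ^ 2 with ht2def
  set DD := Real.sqrt (T ^ 2 + 4 * c ^ 2 * t2) with hDD
  set lam1 := d + (T - DD) / 2 with hlam1
  set lamN := d + (T + DD) / 2 with hlamN
  -- s bounds
  have hxb : |x lastIdx| ≤ ‖x‖ := by
    have h2 : (inner ℝ x (EuclideanSpace.single lastIdx (1:ℝ)) : ℝ) = x lastIdx := by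
      rw [EuclideanSpace.inner_single_right]; simp
    calc |x lastIdx| = |(inner ℝ x (EuclideanSpace.single lastIdx (1:ℝ)) : ℝ)| := by rw [h2]
      _ ≤ ‖x‖ * ‖EuclideanSpace.single lastIdx (1:ℝ)‖ := abs_real_inner_le_norm _ _
      _ = ‖x‖ := by rw [EuclideanSpace.norm_single]; simp
  have hs1 : s ^ 2 ≤ 1 := by
    rw [hs, div_pow, div_le_one (by positivity)]
    calc (x lastIdx) ^ 2 = |x lastIdx| ^ 2 := (sq_abs _).symm
      _ ≤ ‖x‖ ^ 2 := by nlinarith [abs_nonneg (x lastIdx)]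
  have ht2 : 0 ≤ t2 := by rw [ht2def]; linarith
  have hDDnn : 0 ≤ DD := Real.sqrt_nonneg _
  have hDD2 : DD ^ 2 = T ^ 2 + 4 * c ^ 2 * t2 :=
    Real.sq_sqrt (by nlinarith [sq_nonneg c, sq_nonneg T])
  have habsT : |T| ≤ DD := by
    rw [hDD]
    calc |T| = Real.sqrt (T ^ 2) := (Real.sqrt_sq_eq_abs T).symm
      _ ≤ _ := Real.sqrt_le_sqrt (by nlinarith [sq_nonneg c])
  have hlam1d : lam1 ≤ d := by
    rw [hlam1]; have := le_abs_self T; linarith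
  have hdlamN : d ≤ lamN := by
    rw [hlamN]; have := neg_abs_le T; linarith
  -- Hermitian
  have hherm : A.IsHermitian := by
    rw [Matrix.IsHermitian]
    ext i j
    rw [Matrix.conjTranspose_apply, star_trivial, hAM j i, hAM i j]
    have e1 : (if j = i then (1:ℝ) else 0) = if i = j then 1 else 0 := by
      rcases eq_or_ne i j with h | h
      · simp [h]
      · simp [h, h.symm]
    rw [e1]; ring
  set eig := hherm.eigenvalues with heig
  set i0 : Fin N := ⟨0, by omega⟩ with hi0
  have hi0L : i0 ≠ lastIdx := by
    simp only [hi0, Fin.ne_iff_vne]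
    show (0 : ℕ) ≠ N - 1
    omega
  set μ : Fin N → ℝ :=
    fun i => if (i : ℕ) = 0 then lam1 else if (i : ℕ) = N - 1 then lamN else d with hμ
  -- rank two decomposition
  set col : Matrix (Fin N) (Fin 2) ℝ :=
    Matrix.of (fun i k => if k = 0 then x i else (if i = lastIdx then 1 else 0)) with hcol
  set row : Matrix (Fin 2) (Fin N) ℝ :=
    Matrix.of (fun k j => if k = 0 then
      (b / ‖x‖^2) * x j + (c / ‖x‖) * (if j = lastIdx then 1 else 0)
      else (c / ‖x‖) * x j) with hrow
  have hsplit : A = d • (1 : Matrix (Fin N) (Fin N) ℝ) + col * row := by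
    ext i j
    rw [Matrix.add_apply, Matrix.smul_apply, Matrix.one_apply, Matrix.mul_apply,
      Fin.sum_univ_two, hAM i j]
    simp only [hcol, hrow, Matrix.of_apply, if_true, smul_eq_mul]
    norm_num
    split_ifs <;> ring
  have hxx : (∑ j, x j * x j) = ‖x‖ ^ 2 := by
    have h := real_inner_self_eq_norm_sq x
    rw [PiLp.inner_apply] at h
    simpa [sq] using h
  -- determinant of  y•1 - A
  have hdet2 : ∀ y : ℝ, y ≠ d → (y • (1 : Matrix (Fin N) (Fin N) ℝ) - A).det
      = (y - lam1) * (y - lamN) * (y - d) ^ (N - 2) := by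
    intro y hy
    have hyd : y - d ≠ 0 := sub_ne_zero.2 hy
    set z := (y - d)⁻¹ with hz
    have hzz : z * (y - d) = 1 := inv_mul_cancel₀ hyd
    have e1 : y • (1 : Matrix (Fin N) (Fin N) ℝ) - A
        = (y - d) • ((1 : Matrix (Fin N) (Fin N) ℝ) - z • (col * row)) := by
      rw [hsplit, smul_sub, smul_smul, mul_inv_cancel₀ hyd, one_smul, sub_smul]
      abel
    rw [e1, Matrix.det_smul, Fintype.card_fin]
    have e2 : ((1 : Matrix (Fin N) (Fin N) ℝ) - z • (col * row)).det
        = ((1 : Matrix (Fin 2) (Fin 2) ℝ) - z • (row * col)).det := by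
      have h := Matrix.det_one_add_mul_comm ((-z) • col) row
      rw [Matrix.smul_mul, Matrix.mul_smul] at h
      simpa [neg_smul, sub_eq_add_neg] using h
    rw [e2]
    -- compute row * col
    have S1 : ∑ j, ((b / ‖x‖^2) * x j + (c / ‖x‖) * (if j = lastIdx then (1:ℝ) else 0)) * x j
        = b + c * s := by
      have hpt : ∀ j, ((b / ‖x‖^2) * x j + (c / ‖x‖) * (if j = lastIdx then (1:ℝ) else 0)) * x j
          = (b / ‖x‖^2) * (x j * x j) + (if j = lastIdx then (c / ‖x‖) * x j else 0) := by
        intro j; split_ifs <;> ring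
      rw [Finset.sum_congr rfl fun j _ => hpt j, Finset.sum_add_distrib, ← Finset.mul_sum,
        hxx, Finset.sum_ite_eq' Finset.univ lastIdx, if_pos (Finset.mem_univ _), hsr]
      field_simp
    have S2 : ∑ j, ((b / ‖x‖^2) * x j + (c / ‖x‖) * (if j = lastIdx then (1:ℝ) else 0))
          * (if j = lastIdx then (1:ℝ) else 0)
        = (b / ‖x‖^2) * (s * ‖x‖) + c / ‖x‖ := by
      have hpt : ∀ j, ((b / ‖x‖^2) * x j + (c / ‖x‖) * (if j = lastIdx then (1:ℝ) else 0))
            * (if j = lastIdx then (1:ℝ) else 0)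
          = (if j = lastIdx then (b / ‖x‖^2) * x j + (c / ‖x‖) else 0) := by
        intro j; split_ifs <;> ring
      rw [Finset.sum_congr rfl fun j _ => hpt j,
        Finset.sum_ite_eq' Finset.univ lastIdx, if_pos (Finset.mem_univ _), hsr]
    have S3 : ∑ j, ((c / ‖x‖) * x j) * x j = c * ‖x‖ := by
      have hpt : ∀ j, ((c / ‖x‖) * x j) * x j = (c / ‖x‖) * (x j * x j) := by
        intro j; ring
      rw [Finset.sum_congr rfl fun j _ => hpt j, ← Finset.mul_sum, hxx]
      field_simp
    have S4 : ∑ j, ((c / ‖x‖) * x j) * (if j = lastIdx then (1:ℝ) else 0) = c * s := by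
      have hpt : ∀ j, ((c / ‖x‖) * x j) * (if j = lastIdx then (1:ℝ) else 0)
          = (if j = lastIdx then (c / ‖x‖) * x j else 0) := by
        intro j; split_ifs <;> ring
      rw [Finset.sum_congr rfl fun j _ => hpt j,
        Finset.sum_ite_eq' Finset.univ lastIdx, if_pos (Finset.mem_univ _), hsr]
      field_simp
    have E00 : (row * col) 0 0 = b + c * s := by
      rw [Matrix.mul_apply]
      simp only [hrow, hcol, Matrix.of_apply, reduceIte]
      exact S1
    have E01 : (row * col) 0 1 = (b / ‖x‖^2) * (s * ‖x‖) + c / ‖x‖ := by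
      rw [Matrix.mul_apply]
      simp only [hrow, hcol, Matrix.of_apply, reduceIte]
      exact S2
    have E10 : (row * col) 1 0 = c * ‖x‖ := by
      rw [Matrix.mul_apply]
      simp only [hrow, hcol, Matrix.of_apply, reduceIte]
      exact S3
    have E11 : (row * col) 1 1 = c * s := by
      rw [Matrix.mul_apply]
      simp only [hrow, hcol, Matrix.of_apply, reduceIte]
      exact S4
    have hdd : ((1 : Matrix (Fin 2) (Fin 2) ℝ) - z • (row * col)).det
        = 1 - z * T - z ^ 2 * (c ^ 2 * t2) := by
      rw [Matrix.det_fin_two]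
      simp only [Matrix.sub_apply, Matrix.smul_apply, Matrix.one_apply, smul_eq_mul, reduceIte,
        E00, E01, E10, E11]
      simp only [show (1:Fin 2) ≠ 0 from by decide, show (0:Fin 2) ≠ 1 from by decide, if_false]
      rw [hT, ht2def]
      field_simp
      ring
    rw [hdd]
    have hpow : (y - d) ^ N = (y - d) ^ (N - 2) * (y - d) ^ 2 := by
      rw [← pow_add]; congr 1; omega
    have hquad : (y - d) ^ 2 * (1 - z * T - z ^ 2 * (c ^ 2 * t2))
        = (y - lam1) * (y - lamN) := by
      have hq1 : (y - d) ^ 2 * (1 - z * T - z ^ 2 * (c ^ 2 * t2))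
          = (y - d) ^ 2 - T * (y - d) - c ^ 2 * t2 := by
        linear_combination (-(T * (y - d)) - c ^ 2 * t2 * (1 + z * (y - d))) * hzz
      rw [hq1, hlam1, hlamN]
      linear_combination hDD2 / 4
    rw [hpow, mul_assoc, hquad]
    ring
  -- product over μ
  have hprodμ : ∀ y : ℝ, (∏ i, (y - μ i)) = (y - lam1) * (y - lamN) * (y - d) ^ (N - 2) := by
    intro y
    rw [← Finset.mul_prod_erase Finset.univ _ (Finset.mem_univ i0)]
    have hmemL : lastIdx ∈ Finset.univ.erase i0 :=
      Finset.mem_erase.2 ⟨Ne.symm hi0L, Finset.mem_univ _⟩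
    rw [← Finset.mul_prod_erase _ _ hmemL]
    have h1 : μ i0 = lam1 := by simp [hμ, hi0]
    have h2 : μ lastIdx = lamN := by
      have hL : (lastIdx : ℕ) = N - 1 := rfl
      have h0 : (lastIdx : ℕ) ≠ 0 := by rw [hL]; omega
      simp [hμ, h0, hL, show N - 1 ≠ 0 by omega]
    have h3 : ∀ i ∈ (Finset.univ.erase i0).erase lastIdx, y - μ i = y - d := by
      intro i hi
      have hi1 := Finset.mem_erase.mp hi
      have hi2 := Finset.mem_erase.mp hi1.2
      have hv1 : (i : ℕ) ≠ 0 := by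
        intro h; exact hi2.1 (Fin.ext (by simpa [hi0] using h))
      have hv2 : (i : ℕ) ≠ N - 1 := by
        intro h; exact hi1.1 (Fin.ext (by simpa using h))
      simp [hμ, hv1, hv2]
    rw [Finset.prod_congr rfl h3, Finset.prod_const]
    have hcard : ((Finset.univ.erase i0).erase lastIdx).card = N - 2 := by
      rw [Finset.card_erase_of_mem hmemL, Finset.card_erase_of_mem (Finset.mem_univ _),
        Finset.card_univ, Fintype.card_fin]
      omega
    rw [h1, h2, hcard]
    ring
  -- polynomial identity
  have hpoly : (∏ i, (Polynomial.X - Polynomial.C (eig i)))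
      = ∏ i, (Polynomial.X - Polynomial.C (μ i)) := by
    apply Polynomial.eq_of_infinite_eval_eq
    apply ((Set.finite_singleton d).infinite_compl).mono
    intro y hy
    have hyd : y ≠ d := by simpa using hy
    simp only [Set.mem_setOf_eq, Polynomial.eval_prod, Polynomial.eval_sub,
      Polynomial.eval_X, Polynomial.eval_C]
    calc (∏ i, (y - eig i)) = (y • (1 : Matrix (Fin N) (Fin N) ℝ) - A).det :=
          (det_smul_one_sub_eq_prod hherm y).symm
      _ = (y - lam1) * (y - lamN) * (y - d) ^ (N - 2) := hdet2 y hyd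
      _ = ∏ i, (y - μ i) := (hprodμ y).symm
  have hμmono : Monotone μ := by
    intro i j hij
    have hij' : (i : ℕ) ≤ (j : ℕ) := hij
    have hiN := i.isLt
    have hjN := j.isLt
    have hlam1N : lam1 ≤ lamN := le_trans hlam1d hdlamN
    simp only [hμ]
    split_ifs <;> first | exact le_rfl | linarith | omega
  have hsorted : eig ∘ Tuple.sort eig = μ :=
    monotone_eq_of_multiset_map_eq (Tuple.monotone_sort eig) hμmono
      (by rw [multiset_map_perm_comp]; exact multiset_eq_of_prod_X_sub_C eig μ hpoly)
  have hse : sortedEig A = μ := by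
    unfold sortedEig
    rw [dif_pos hherm]
    exact hsorted
  refine ⟨?_, ?_, ?_, ?_⟩
  · rw [hse]
    simp [hμ, hi0]
  · intro i h0 h1
    rw [hse]
    simp only [hμ]
    rw [if_neg (by omega), if_neg (by omega)]
  · rw [hse]
    have hL : ((⟨N - 1, by omega⟩ : Fin N) : ℕ) = N - 1 := rfl
    have h0 : ((⟨N - 1, by omega⟩ : Fin N) : ℕ) ≠ 0 := by rw [hL]; omega
    simp [hμ, h0, hL]
  · intro v hv hvn
    have hvx : (∑ j, v j * x j) = 0 := by
      have h := hv
      rw [PiLp.inner_apply] at h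
      simpa [mul_comm] using h
    funext i
    rw [Matrix.mulVec, dotProduct]
    have key : ∀ j, A i j * v j
        = (if j = i then d * v j else 0)
          + ((b / ‖x‖^2) * (x i) + (c / ‖x‖) * (if i = lastIdx then 1 else 0)) * (v j * x j)
          + ((c / ‖x‖) * x i) * (if j = lastIdx then v j else 0) := by
      intro j
      rw [hAM i j]
      rcases eq_or_ne i j with h | h
      · subst h; split_ifs <;> ring
      · rw [if_neg h, if_neg (Ne.symm h)]
        split_ifs <;> ring
    rw [Finset.sum_congr rfl fun j _ => key j]
    rw [Finset.sum_add_distrib, Finset.sum_add_distrib,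
      Finset.sum_ite_eq' Finset.univ i, if_pos (Finset.mem_univ _),
      ← Finset.mul_sum, hvx, ← Finset.mul_sum,
      Finset.sum_ite_eq' Finset.univ lastIdx, if_pos (Finset.mem_univ _), hvn]
    ring
end
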